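/- arXiv:2103.06468 — 5 statements merged into one kernel-verified Lean document; each statement's English description precedes it below -/
import Mathlib

section
/- Let n ≥ 2, 2 ≤ t ≤ n, write n = tq + r with 0 ≤ r ≤ t−1. The maximum size of an independent set in the t-path hypergraph H_t(C_n) is n − q if r = 0 and n − q − 1 if r ≠ 0. -/
/-- the hyperedges of the t-path hypergraph of the cycle Cₙ: all sets of t
cyclically consecutive vertices. -/
def pathHyperedges (n t : ℕ) [NeZero n] : Finset (Finset (ZMod n)) :=
  Finset.image
    (fun i : ZMod n => Finset.image (fun j : Fin t => i + ((j : ℕ) : ZMod n)) Finset.univ)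
    Finset.univ

section Aux

variable {n t : ℕ} [NeZero n]

lemma natCast_val_self (a : ZMod n) : ((a.val : ℕ) : ZMod n) = a := by
  simp [ZMod.natCast_val (R := ZMod n) a]

lemma mem_edge (ht : t ≤ n) (i x : ZMod n) :
    x ∈ Finset.image (fun j : Fin t => i + ((j : ℕ) : ZMod n)) Finset.univ ↔
      (x - i).val < t := by
  simp only [Finset.mem_image, Finset.mem_univ, true_and]
  constructor
  · rintro ⟨j, rfl⟩
    rw [add_sub_cancel_left, ZMod.val_cast_of_lt (lt_of_lt_of_le j.2 ht)]
    exact j.2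
  · intro h
    refine ⟨⟨(x - i).val, h⟩, ?_⟩
    simp [natCast_val_self]

lemma indep_iff (ht : t ≤ n) (W : Finset (ZMod n)) :
    (∀ e ∈ pathHyperedges n t, ¬ e ⊆ W) ↔
      ∀ i : ZMod n, ∃ b, b ∉ W ∧ (b - i).val < t := by
  constructor
  · intro h i
    have he : (Finset.image (fun j : Fin t => i + ((j : ℕ) : ZMod n)) Finset.univ) ∈
        pathHyperedges n t := Finset.mem_image_of_mem _ (Finset.mem_univ i)
    have h2 := h _ he
    rw [Finset.not_subset] at h2
    obtain ⟨x, hx, hxW⟩ := h2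
    exact ⟨x, hxW, (mem_edge ht i x).mp hx⟩
  · intro h e he hsub
    rw [pathHyperedges, Finset.mem_image] at he
    obtain ⟨i, -, rfl⟩ := he
    obtain ⟨b, hbW, hbv⟩ := h i
    exact hbW (hsub ((mem_edge ht i b).mpr hbv))

lemma fiber_card (ht : t ≤ n) (b : ZMod n) :
    (Finset.univ.filter (fun i : ZMod n => (b - i).val < t)).card = t := by
  have himg : Finset.univ.filter (fun i : ZMod n => (b - i).val < t)
      = Finset.image (fun j : Fin t => b - ((j : ℕ) : ZMod n)) Finset.univ := by
    ext i
    simp only [Finset.mem_filter, Finset.mem_univ, true_and, Finset.mem_image]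
    constructor
    · intro h
      exact ⟨⟨(b - i).val, h⟩, by simp [natCast_val_self]⟩
    · rintro ⟨j, rfl⟩
      rw [sub_sub_cancel, ZMod.val_cast_of_lt (lt_of_lt_of_le j.2 ht)]
      exact j.2
  rw [himg, Finset.card_image_of_injective _ ?_, Finset.card_univ, Fintype.card_fin]
  intro a a' h
  have h2 : ((a : ℕ) : ZMod n) = ((a' : ℕ) : ZMod n) := by
    have := congrArg (fun z => b - z) h
    simpa using this
  have h3 := congrArg ZMod.val h2
  rw [ZMod.val_cast_of_lt (lt_of_lt_of_le a.2 ht),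
    ZMod.val_cast_of_lt (lt_of_lt_of_le a'.2 ht)] at h3
  exact Fin.ext h3

lemma count_lower (ht : t ≤ n) (B : Finset (ZMod n))
    (hB : ∀ i : ZMod n, ∃ b ∈ B, (b - i).val < t) : n ≤ B.card * t := by
  have key : ∀ i : ZMod n, 1 ≤ (B.filter (fun b => (b - i).val < t)).card := by
    intro i
    obtain ⟨b, hb, hv⟩ := hB i
    exact Finset.card_pos.mpr ⟨b, Finset.mem_filter.mpr ⟨hb, hv⟩⟩
  calc n = ∑ _i : ZMod n, 1 := by simp [Finset.card_univ, ZMod.card]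
    _ ≤ ∑ i : ZMod n, (B.filter (fun b => (b - i).val < t)).card :=
        Finset.sum_le_sum (fun i _ => key i)
    _ = ∑ i : ZMod n, ∑ b ∈ B, if (b - i).val < t then 1 else 0 :=
        Finset.sum_congr rfl fun i _ => Finset.card_filter _ _
    _ = ∑ b ∈ B, ∑ i : ZMod n, if (b - i).val < t then 1 else 0 := Finset.sum_comm
    _ = ∑ _b ∈ B, t := by
        refine Finset.sum_congr rfl fun b _ => ?_
        rw [← Finset.card_filter]
        exact fiber_card ht b
    _ = B.card * t := by simp [Finset.sum_const, smul_eq_mul]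

end Aux

/-- writing n = t*q + r with 0 ≤ r < t, the maximum size of an
independent set of the t-path hypergraph of Cₙ is n - q if r = 0 and n - q - 1
otherwise. -/
theorem stmt13 (n t q r : ℕ) [NeZero n] (hn : 2 ≤ n) (ht : 2 ≤ t) (htn : t ≤ n)
    (hq : n = t * q + r) (hr : r < t) :
    IsGreatest
      { m : ℕ | ∃ W : Finset (ZMod n),
          (∀ e ∈ pathHyperedges n t, ¬ e ⊆ W) ∧ W.card = m }
      (if r = 0 then n - q else n - q - 1) := by
  have hn0 : 0 < n := NeZero.pos n
  have ht0 : 0 < t := by omega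
  set q' : ℕ := if r = 0 then q else q + 1 with hq'def
  have hq1 : 1 ≤ q := by
    rcases Nat.eq_zero_or_pos q with h | h
    · subst h; omega
    · exact h
  have hq'1 : 1 ≤ q' := by rcases eq_or_ne r 0 with h | h <;> simp [hq'def, h] <;> omega
  have htarget : (if r = 0 then n - q else n - q - 1) = n - q' := by
    rcases eq_or_ne r 0 with h | h <;> simp [hq'def, h] <;> omega
  have hq't : n ≤ q' * t := by
    rcases eq_or_ne r 0 with h | h
    · rw [hq'def, if_pos h, mul_comm]; omega
    · rw [hq'def, if_neg h, add_mul, one_mul, mul_comm]; omega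
  have hub : (q' - 1) * t < n := by
    rcases eq_or_ne r 0 with h | h
    · rw [hq'def, if_pos h]
      have h2 : (q - 1) * t = t * q - t * 1 := by rw [mul_comm, Nat.mul_sub]
      omega
    · rw [hq'def, if_neg h, Nat.add_sub_cancel, mul_comm]; omega
  rw [htarget]
  constructor
  · -- membership: construct the independent set
    set B : Finset (ZMod n) :=
      Finset.image (fun k : Fin q' => ((k * t : ℕ) : ZMod n)) Finset.univ with hBdef
    have hklt : ∀ k : Fin q', (k : ℕ) * t < n := by
      intro k
      calc (k : ℕ) * t ≤ (q' - 1) * t := Nat.mul_le_mul_right t (by omega)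
        _ < n := hub
    have hinj : Function.Injective (fun k : Fin q' => ((k * t : ℕ) : ZMod n)) := by
      intro a b h
      have h3 := congrArg ZMod.val h
      simp only at h3
      rw [ZMod.val_cast_of_lt (hklt a), ZMod.val_cast_of_lt (hklt b)] at h3
      exact Fin.ext (Nat.eq_of_mul_eq_mul_right ht0 h3)
    have hBcard : B.card = q' := by
      rw [hBdef, Finset.card_image_of_injective _ hinj, Finset.card_univ, Fintype.card_fin]
    refine ⟨Bᶜ, ?_, ?_⟩
    · rw [indep_iff htn]
      intro i
      set v := i.val with hvdef
      have hvn : v < n := ZMod.val_lt i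
      have hival : ((v : ℕ) : ZMod n) = i := natCast_val_self i
      -- helper: a multiple m with v ≤ m, m - v < t, m < n works
      have hmem : ∀ k : Fin q', ((k * t : ℕ) : ZMod n) ∈ B := by
        intro k; exact Finset.mem_image_of_mem _ (Finset.mem_univ k)
      have hworks : ∀ m : ℕ, m < n → v ≤ m → m - v < t →
          ((((m : ℕ) : ZMod n)) - i).val < t := by
        intro m hmn hvm hmt
        have : ((m : ℕ) : ZMod n) - i = ((m - v : ℕ) : ZMod n) := by
          rw [← hival, ← Nat.cast_sub hvm]
        rw [this, ZMod.val_cast_of_lt (lt_of_lt_of_le hmt htn)]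
        exact hmt
      by_cases hcase : (q' - 1) * t < v
      · -- use b = 0
        have hv0 : 0 < v := lt_of_le_of_lt (Nat.zero_le _) hcase
        have hi0 : i ≠ 0 := by
          intro h
          rw [hvdef, h] at hv0
          simp at hv0
        refine ⟨0, ?_, ?_⟩
        · simp only [Finset.mem_compl, not_not]
          have := hmem ⟨0, hq'1⟩
          simpa using this
        · rw [zero_sub, ZMod.neg_val, if_neg hi0]
          -- n - v < t : n ≤ q' * t = (q'-1)*t + t < v + t
          have h1 : q' * t = (q' - 1) * t + t := by
            have : q' = (q' - 1) + 1 := by omega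
            rw [this, add_mul, one_mul, Nat.add_sub_cancel]
          omega
      · push_neg at hcase
        set k := v / t with hkdef
        have hdm : t * (v / t) + v % t = v := Nat.div_add_mod v t
        have hmlt : v % t < t := Nat.mod_lt _ ht0
        have hkt : k * t = t * (v / t) := by rw [hkdef, mul_comm]
        have hstep : (k + 1) * t = k * t + t := by ring
        by_cases hm : v % t = 0
        · -- v = k * t exactly; b = i itself works
          have hkv : k * t = v := by omega
          have hkq : k < q' := by
            have : k * t ≤ (q' - 1) * t := hkv ▸ hcase
            have hk1 : k ≤ q' - 1 := Nat.le_of_mul_le_mul_right this ht0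
            omega
          refine ⟨((k * t : ℕ) : ZMod n), ?_, ?_⟩
          · simp only [Finset.mem_compl, not_not]
            exact hmem ⟨k, hkq⟩
          · exact hworks _ (hkv ▸ hvn) (by omega) (by omega)
        · -- use b = (k+1)*t
          have hklow : k * t < v := by omega
          have hkhigh : v < (k + 1) * t := by omega
          have hkq : k + 1 < q' := by
            have h1 : k * t < (q' - 1) * t := lt_of_lt_of_le hklow hcase
            have h2 : k < q' - 1 := lt_of_mul_lt_mul_right h1 (Nat.zero_le t)
            omega
          have hmn : (k + 1) * t < n := by
            calc (k + 1) * t ≤ (q' - 1) * t := Nat.mul_le_mul_right t (by omega)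
              _ < n := hub
          refine ⟨(((k + 1) * t : ℕ) : ZMod n), ?_, ?_⟩
          · simp only [Finset.mem_compl, not_not]
            exact hmem ⟨k + 1, hkq⟩
          · exact hworks _ hmn (by omega) (by omega)
    · rw [Finset.card_compl, hBcard, ZMod.card]
  · -- upper bound
    rintro m ⟨W, hW, rfl⟩
    have hBall := (indep_iff htn W).mp hW
    have hB : ∀ i : ZMod n, ∃ b ∈ Wᶜ, (b - i).val < t := by
      intro i
      obtain ⟨b, hb, hv⟩ := hBall i
      exact ⟨b, Finset.mem_compl.mpr hb, hv⟩
    have hcount := count_lower htn Wᶜ hB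
    have hBcard : q' ≤ Wᶜ.card := by
      by_contra hlt
      push_neg at hlt
      have h1 : Wᶜ.card * t ≤ (q' - 1) * t := Nat.mul_le_mul_right t (by omega)
      exact absurd (hcount.trans h1) (not_le.mpr hub)
    have hWc : Wᶜ.card = n - W.card := by rw [Finset.card_compl, ZMod.card]
    have hWn : W.card ≤ n := by
      calc W.card ≤ Fintype.card (ZMod n) := Finset.card_le_univ W
        _ = n := ZMod.card n
    omega
end

section
/- Let C_n be the cycle on n vertices, 2 ≤ t ≤ n, and write n = tq + r with 0 ≤ r ≤ t−1. Then the Waldschmidt constant of the t-path ideal I = I_t(C_n) is t if r = 0, and n/(q+1) if r ≠ 0. -/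
set_option linter.unusedSectionVars false
set_option linter.unnecessarySimpa false
set_option linter.unusedVariables false
set_option maxHeartbeats 1000000



open MvPolynomial

noncomputable def symbolicPower {R : Type*} [CommRing R] (I : Ideal R) (n : ℕ) : Ideal R :=
  sInf { J : Ideal R | ∃ (p : Ideal R) (hp : p.IsPrime),
    p ∈ associatedPrimes R (R ⧸ I) ∧
    J = Ideal.comap (algebraMap R (Localization (@Ideal.primeCompl R _ p hp)))
        (Ideal.map (algebraMap R (Localization (@Ideal.primeCompl R _ p hp))) (I ^ n)) }

noncomputable def edgeIdeal (k : Type*) {V : Type*} [CommRing k] [DecidableEq V]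
    (E : Finset (Finset V)) : Ideal (MvPolynomial V k) :=
  Ideal.span ((fun e : Finset V => ∏ x ∈ e, (X x : MvPolynomial V k)) '' ↑E)

/-- least degree of a nonzero element of an ideal of polynomials -/
noncomputable def alphaIdeal {k V : Type*} [CommRing k] (J : Ideal (MvPolynomial V k)) : ℕ :=
  sInf { d : ℕ | ∃ f ∈ J, f ≠ 0 ∧ f.totalDegree = d }


namespace Stmt14

variable {k : Type*} [Field k]

/-- indicator finsupp of a finset -/
noncomputable def indF {V : Type*} [DecidableEq V] (S : Finset V) : V →₀ ℕ := S.sum fun u => Finsupp.single u 1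

lemma indF_apply {V : Type*} [DecidableEq V] (S : Finset V) (v : V) :
    indF S v = if v ∈ S then 1 else 0 := by
  classical
  simp only [indF]
  rw [Finset.sum_apply']
  simp [Finsupp.single_apply, Finset.sum_ite_eq' S v (fun _ => 1)]

/-- weight of an exponent on a set of variables -/
def W {V : Type*} (C : Finset V) (d : V →₀ ℕ) : ℕ := ∑ v ∈ C, d v

lemma prod_X_eq_monomial {V : Type*} [DecidableEq V] (S : Finset V) :
    (∏ x ∈ S, (X x : MvPolynomial V k)) = monomial (indF S) 1 := by
  classical
  induction S using Finset.cons_induction with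
  | empty => simp [indF]
  | cons a s ha ih =>
      rw [Finset.prod_cons, ih, X, monomial_mul]
      simp [indF, Finset.sum_insert ha]

end Stmt14

namespace Stmt14

section Phi

variable {k : Type*} [Field k] {V : Type*} [DecidableEq V]

/-- the marker homomorphism: variables in C get an extra factor X -/
noncomputable def phi (C : Finset V) :
    MvPolynomial V k →+* Polynomial (MvPolynomial V k) :=
  eval₂Hom (Polynomial.C.comp MvPolynomial.C)
    (fun v => if v ∈ C then Polynomial.C (X v) * Polynomial.X else Polynomial.C (X v))

lemma phi_monomial (C : Finset V) (d : V →₀ ℕ) (c : k) :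
    phi C (monomial d c) =
      Polynomial.C (monomial d c) * Polynomial.X ^ (W C d) := by
  classical
  rw [phi, eval₂Hom_monomial]
  have h1 : (d.prod fun v e =>
      (if v ∈ C then Polynomial.C (X v) * Polynomial.X else Polynomial.C (X v)) ^ e)
      = Polynomial.C (d.prod fun v e => (X v : MvPolynomial V k) ^ e)
        * Polynomial.X ^ (W C d) := by
    rw [Finsupp.prod]
    have : ∀ v ∈ d.support,
        (if v ∈ C then Polynomial.C (X v) * Polynomial.X else Polynomial.C (X v)) ^ (d v)
        = Polynomial.C ((X v : MvPolynomial V k) ^ (d v))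
          * Polynomial.X ^ (if v ∈ C then d v else 0) := by
      intro v _
      by_cases hv : v ∈ C <;> simp [hv, mul_pow, map_pow]
    rw [Finset.prod_congr rfl this, Finset.prod_mul_distrib, ← map_prod, ← Finsupp.prod,
      Finset.prod_pow_eq_pow_sum]
    congr 2
    · rw [W]
      rw [Finset.sum_ite_mem d.support C (d ·)]  -- maybe wrong name
      · rw [Finset.sum_subset (Finset.inter_subset_right (s₁ := d.support))]
        intro v hv hv2
        simp only [Finset.mem_inter] at hv2
        by_contra h
        exact hv2 ⟨Finsupp.mem_support_iff.2 (by omega), hv⟩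
  rw [h1, ← mul_assoc]
  congr 1
  rw [RingHom.comp_apply, ← map_mul, monomial_eq]

end Phi

end Stmt14

namespace Stmt14

section Phi2

variable {k : Type*} [Field k] {V : Type*} [DecidableEq V]

lemma phi_eq_sum (C : Finset V) (f : MvPolynomial V k) :
    phi C f = ∑ d ∈ f.support,
      Polynomial.C (monomial d (coeff d f)) * Polynomial.X ^ (W C d) := by
  conv_lhs => rw [← support_sum_monomial_coeff f]
  rw [map_sum]
  exact Finset.sum_congr rfl fun d _ => phi_monomial C d (coeff d f)

lemma X_pow_dvd_phi_iff (C : Finset V) (f : MvPolynomial V k) (j : ℕ) :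
    Polynomial.X ^ j ∣ phi C f ↔ ∀ d ∈ f.support, j ≤ W C d := by
  constructor
  · intro h d hd
    by_contra hlt
    push_neg at hlt
    rw [Polynomial.X_pow_dvd_iff] at h
    have h0 := h (W C d) hlt
    rw [phi_eq_sum, Polynomial.finset_sum_coeff] at h0
    have : ∀ e ∈ f.support,
        (Polynomial.C (monomial e (coeff e f)) * Polynomial.X ^ (W C e)).coeff (W C d)
        = if W C d = W C e then monomial e (coeff e f) else 0 := by
      intro e _
      rw [Polynomial.coeff_C_mul, Polynomial.coeff_X_pow]
      by_cases h : W C d = W C e <;> simp [h]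
    rw [Finset.sum_congr rfl this] at h0
    have h2 := congrArg (coeff d) h0
    rw [coeff_sum] at h2
    simp only [apply_ite (coeff d), coeff_monomial, coeff_zero] at h2
    rw [Finset.sum_eq_single d] at h2
    · simp only [if_pos rfl] at h2
      exact (mem_support_iff.1 hd) (by simpa using h2)
    · intro e he hne
      simp [coeff_monomial, hne]
    · intro h; exact absurd hd h
  · intro h
    rw [phi_eq_sum]
    apply Finset.dvd_sum
    intro d hd
    exact Dvd.dvd.mul_left (pow_dvd_pow _ (h d hd)) _

end Phi2

end Stmt14

namespace Stmt14

section PC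

variable {k : Type*} [Field k] {V : Type*} [DecidableEq V]

/-- the monomial prime of a vertex set -/
noncomputable def P (k : Type*) [Field k] {V : Type*} (C : Finset V) :
    Ideal (MvPolynomial V k) :=
  Ideal.span ((fun v => (X v : MvPolynomial V k)) '' ↑C)

lemma phi_mem_span_X {C : Finset V} {f : MvPolynomial V k} {m : ℕ} (hf : f ∈ (P k C) ^ m) :
    Polynomial.X ^ m ∣ phi C f := by
  have h1 : Ideal.map (phi C) (P k C) ≤ Ideal.span {(Polynomial.X : Polynomial (MvPolynomial V k))} := by
    rw [P, Ideal.map_span]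
    apply Ideal.span_le.2
    rintro y ⟨y', ⟨v, hv, rfl⟩, rfl⟩
    simp only [phi, coe_eval₂Hom, eval₂_X]
    rw [if_pos (by exact_mod_cast hv)]
    exact Ideal.mem_span_singleton.2 ⟨Polynomial.C (X v), mul_comm _ _⟩
  have h2 : phi C f ∈ (Ideal.span {(Polynomial.X : Polynomial (MvPolynomial V k))}) ^ m := by
    have := Ideal.mem_map_of_mem (phi C) hf
    rw [Ideal.map_pow] at this
    exact Ideal.pow_right_mono h1 m this
  rw [Ideal.span_singleton_pow, Ideal.mem_span_singleton] at h2
  exact h2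

lemma mem_P_of_W_pos {C : Finset V} {d : V →₀ ℕ} (c : k) {m : ℕ} (h : m ≤ W C d) :
    monomial d c ∈ (P k C) ^ m := by
  classical
  induction m generalizing d with
  | zero => simp
  | succ m ih =>
      obtain ⟨v, hv, hdv⟩ : ∃ v ∈ C, 0 < d v := by
        by_contra hc
        push_neg at hc
        have hz : W C d = 0 := Finset.sum_eq_zero fun v hv => by have := hc v hv; omega
        omega
      set d' : V →₀ ℕ := d - Finsupp.single v 1 with hd'
      have happ : ∀ u, d' u = d u - (if v = u then 1 else 0) := by
        intro u; rw [hd', Finsupp.tsub_apply, Finsupp.single_apply]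
      have hsum : d = d' + Finsupp.single v 1 := by
        ext u
        rw [Finsupp.add_apply, happ u, Finsupp.single_apply]
        by_cases hu : v = u
        · subst hu; simp; omega
        · simp [hu]
      have hW : m ≤ W C d' := by
        have hWW : W C d' + 1 = W C d := by
          rw [W, W, ← Finset.sum_erase_add C _ hv, ← Finset.sum_erase_add C (d ·) hv]
          have h2 : ∀ u ∈ C.erase v, d' u = d u := by
            intro u hu
            rw [happ u, if_neg (fun h => Finset.ne_of_mem_erase hu h.symm)]
            simp
          rw [Finset.sum_congr rfl h2, happ v, if_pos rfl]
          have heta : (∑ x ∈ C.erase v, d x) = (C.erase v).sum ⇑d := rfl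
          omega
        omega
      have hmono : monomial d c = monomial d' c * X v := by
        rw [X, monomial_mul, mul_one, ← hsum]
      rw [hmono, pow_succ]
      exact Ideal.mul_mem_mul (ih hW) (Ideal.subset_span ⟨v, hv, rfl⟩)

lemma mem_P_pow_iff {C : Finset V} {f : MvPolynomial V k} {m : ℕ} :
    f ∈ (P k C) ^ m ↔ ∀ d ∈ f.support, m ≤ W C d := by
  constructor
  · intro hf
    exact (X_pow_dvd_phi_iff C f m).1 (phi_mem_span_X hf)
  · intro h
    have := Ideal.sum_mem ((P k C) ^ m) (fun d hd => mem_P_of_W_pos (coeff d f) (h d hd))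
    rwa [support_sum_monomial_coeff] at this

lemma mem_P_iff {C : Finset V} {f : MvPolynomial V k} :
    f ∈ P k C ↔ ∀ d ∈ f.support, 1 ≤ W C d := by
  conv_lhs => rw [← pow_one (P k C)]
  exact mem_P_pow_iff

lemma P_isPrime (C : Finset V) : (P k C).IsPrime := by
  constructor
  · intro h
    have : (1 : MvPolynomial V k) ∈ P k C := h ▸ Submodule.mem_top
    rw [mem_P_iff] at this
    have h2 := this 0 (by simp)
    simp [W] at h2
  · intro f g hfg
    by_contra hc
    push_neg at hc
    obtain ⟨hf, hg⟩ := hc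
    rw [mem_P_iff] at hf hg hfg
    have hXf : ¬ (Polynomial.X ∣ phi C f) := by
      rw [← pow_one (Polynomial.X (R := MvPolynomial V k)), X_pow_dvd_phi_iff]
      push_neg at hf ⊢
      exact hf
    have hXg : ¬ (Polynomial.X ∣ phi C g) := by
      rw [← pow_one (Polynomial.X (R := MvPolynomial V k)), X_pow_dvd_phi_iff]
      push_neg at hg ⊢
      exact hg
    have hXfg : Polynomial.X ∣ phi C (f * g) := by
      rw [← pow_one (Polynomial.X (R := MvPolynomial V k)), X_pow_dvd_phi_iff]
      exact hfg
    rw [map_mul] at hXfg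
    rcases (Polynomial.prime_X.2.2 _ _ hXfg) with h | h
    · exact hXf h
    · exact hXg h

/-- primaryness of powers of monomial primes, in the form we need -/
lemma P_pow_primary {C : Finset V} {s f : MvPolynomial V k} {m : ℕ}
    (hs : s ∉ P k C) (h : s * f ∈ (P k C) ^ m) : f ∈ (P k C) ^ m := by
  have hXs : ¬ (Polynomial.X ∣ phi C s) := by
    rw [← pow_one (Polynomial.X (R := MvPolynomial V k)), X_pow_dvd_phi_iff]
    rw [mem_P_iff] at hs
    push_neg at hs ⊢
    exact hs
  have hdvd : Polynomial.X ^ m ∣ phi C s * phi C f := by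
    rw [← map_mul]
    exact phi_mem_span_X h
  have := Polynomial.prime_X.pow_dvd_of_dvd_mul_left m hXs hdvd
  rw [mem_P_pow_iff]
  exact (X_pow_dvd_phi_iff C f m).1 this

end PC

end Stmt14

namespace Stmt14

section Cycle

variable {k : Type*} [Field k] {n t : ℕ} [NeZero n]

/-- the edge (window of length t) starting at a -/
def Edge (n t : ℕ) [NeZero n] (a : ZMod n) : Finset (ZMod n) :=
  Finset.image (fun j : Fin t => a + ((j : ℕ) : ZMod n)) Finset.univ

lemma mem_Edge {a u : ZMod n} :
    u ∈ Edge n t a ↔ ∃ l : ℕ, l < t ∧ u = a + (l : ZMod n) := by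
  simp only [Edge, Finset.mem_image, Finset.mem_univ, true_and]
  constructor
  · rintro ⟨j, rfl⟩; exact ⟨j, j.2, rfl⟩
  · rintro ⟨l, hl, rfl⟩; exact ⟨⟨l, hl⟩, rfl⟩

/-- a vertex cover of the path hypergraph -/
def IsCover (n t : ℕ) [NeZero n] (C : Finset (ZMod n)) : Prop :=
  ∀ a : ZMod n, ∃ u ∈ C, u ∈ Edge n t a

/-- a minimal vertex cover -/
def IsMinCover (n t : ℕ) [NeZero n] (C : Finset (ZMod n)) : Prop :=
  IsCover n t C ∧ ∀ v ∈ C, ¬ IsCover n t (C.erase v)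

lemma exists_minCover {D : Finset (ZMod n)} (hD : IsCover n t D) :
    ∃ C ⊆ D, IsMinCover n t C := by
  classical
  induction D using Finset.strongInductionOn with
  | _ D ih =>
    by_cases h : ∃ v ∈ D, IsCover n t (D.erase v)
    · obtain ⟨v, hv, hcov⟩ := h
      obtain ⟨C, hC1, hC2⟩ := ih (D.erase v) (Finset.erase_ssubset hv) hcov
      exact ⟨C, hC1.trans (Finset.erase_subset _ _), hC2⟩
    · push_neg at h
      exact ⟨D, Finset.Subset.refl D, hD, h⟩

/-- the path ideal -/
noncomputable def pathIdeal (k : Type*) [Field k] (n t : ℕ) [NeZero n] :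
    Ideal (MvPolynomial (ZMod n) k) :=
  edgeIdeal k (pathHyperedges n t)

lemma pathIdeal_eq_span :
    pathIdeal k n t = Ideal.span
      ((fun d => (monomial d (1:k))) '' (Set.range fun a => indF (Edge n t a))) := by
  rw [pathIdeal, edgeIdeal]
  congr 1
  ext y
  constructor
  · rintro ⟨e, he, rfl⟩
    rw [Finset.mem_coe, pathHyperedges, Finset.mem_image] at he
    obtain ⟨i, _, rfl⟩ := he
    exact ⟨indF (Edge n t i), ⟨i, rfl⟩, (prod_X_eq_monomial _).symm⟩
  · rintro ⟨d, ⟨i, rfl⟩, rfl⟩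
    refine ⟨Edge n t i, ?_, prod_X_eq_monomial _⟩
    rw [Finset.mem_coe, pathHyperedges, Finset.mem_image]
    exact ⟨i, Finset.mem_univ i, rfl⟩

lemma mem_pathIdeal_iff {f : MvPolynomial (ZMod n) k} :
    f ∈ pathIdeal k n t ↔ ∀ d ∈ f.support, ∃ a : ZMod n, indF (Edge n t a) ≤ d := by
  rw [pathIdeal_eq_span, mem_ideal_span_monomial_image]
  simp only [Set.mem_range]
  constructor
  · intro h d hd
    obtain ⟨si, ⟨a, rfl⟩, hle⟩ := h d hd
    exact ⟨a, hle⟩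
  · intro h d hd
    obtain ⟨a, hle⟩ := h d hd
    exact ⟨_, ⟨a, rfl⟩, hle⟩

lemma indF_le_iff {S : Finset (ZMod n)} {d : ZMod n →₀ ℕ} :
    indF S ≤ d ↔ ∀ u ∈ S, 1 ≤ d u := by
  rw [Finsupp.le_iff]
  constructor
  · intro h u hu
    have := h u (by rw [Finsupp.mem_support_iff, indF_apply, if_pos hu]; simp)
    rwa [indF_apply, if_pos hu] at this
  · intro h u hu
    rw [indF_apply]
    by_cases h2 : u ∈ S
    · rw [if_pos h2]; exact h u h2
    · rw [if_neg h2]; omega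

/-- path ideal is contained in cover primes -/
lemma pathIdeal_le_P {C : Finset (ZMod n)} (hC : IsCover n t C) :
    pathIdeal k n t ≤ P k C := by
  rw [pathIdeal_eq_span, Ideal.span_le]
  rintro y ⟨d, ⟨a, rfl⟩, rfl⟩
  rw [SetLike.mem_coe, mem_P_iff]
  intro e he
  classical
  rw [MvPolynomial.support_monomial, if_neg (one_ne_zero)] at he
  rw [Finset.mem_singleton] at he
  subst he
  obtain ⟨u, hu, hue⟩ := hC a
  calc 1 ≤ indF (Edge n t a) u := by rw [indF_apply, if_pos hue]
  _ ≤ W C _ := Finset.single_le_sum (f := fun v => indF (Edge n t a) v) (fun _ _ => Nat.zero_le _) hu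

end Cycle

end Stmt14

namespace Stmt14

section Assoc

variable {k : Type*} [Field k] {n t : ℕ} [NeZero n]

lemma inf_minCovers_le {y : MvPolynomial (ZMod n) k}
    (h : ∀ C, IsMinCover n t C → y ∈ P k C) : y ∈ pathIdeal k n t := by
  classical
  rw [mem_pathIdeal_iff]
  intro d hd
  by_contra hc
  push_neg at hc
  have hcov : IsCover n t (d.supportᶜ) := by
    intro a
    have := hc a
    rw [indF_le_iff] at this
    push_neg at this
    obtain ⟨u, hu, hdu⟩ := this
    exact ⟨u, by simp [Finsupp.mem_support_iff]; omega, hu⟩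
  obtain ⟨C, hCsub, hCmin⟩ := exists_minCover hcov
  have := (mem_P_iff.1 (h C hCmin)) d hd
  rw [W] at this
  obtain ⟨v, hv, hdv⟩ : ∃ v ∈ C, 0 < d v := by
    by_contra hcc
    push_neg at hcc
    have : ∑ v ∈ C, d v = 0 := Finset.sum_eq_zero fun v hv => by have := hcc v hv; omega
    omega
  have hvc := hCsub hv
  rw [Finset.mem_compl, Finsupp.mem_support_iff] at hvc
  omega

lemma X_mul_fC_mem {C : Finset (ZMod n)} (hC : IsMinCover n t C) {v : ZMod n} (hv : v ∈ C) :
    (X v : MvPolynomial (ZMod n) k) * monomial (indF Cᶜ) 1 ∈ pathIdeal k n t := by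
  classical
  have hnc := hC.2 v hv
  rw [IsCover] at hnc
  push_neg at hnc
  obtain ⟨a, ha⟩ := hnc
  have hvE : v ∈ Edge n t a := by
    obtain ⟨u, hu, hue⟩ := hC.1 a
    have huv : u = v := by
      by_contra hne
      exact (ha u (Finset.mem_erase.2 ⟨hne, hu⟩)) hue
    exact huv ▸ hue
  rw [X, monomial_mul, one_mul, mem_pathIdeal_iff]
  intro d hd
  classical
  rw [MvPolynomial.support_monomial, if_neg one_ne_zero, Finset.mem_singleton] at hd
  subst hd
  refine ⟨a, indF_le_iff.2 fun u hu => ?_⟩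
  rw [Finsupp.add_apply, Finsupp.single_apply, indF_apply]
  by_cases huv : u = v
  · rw [if_pos huv.symm]; omega
  · have hnc2 : u ∉ C := fun huC => (ha u (Finset.mem_erase.2 ⟨huv, huC⟩)) hu
    rw [if_neg (fun h : v = u => huv h.symm), if_pos (Finset.mem_compl.mpr hnc2)]

lemma mem_P_of_mul_fC_mem {C : Finset (ZMod n)} (hC : IsCover n t C)
    {f : MvPolynomial (ZMod n) k} (h : f * monomial (indF Cᶜ) 1 ∈ pathIdeal k n t) :
    f ∈ P k C := by
  classical
  rw [mem_P_iff]
  intro d hd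
  have hs : d + indF Cᶜ ∈ (f * monomial (indF Cᶜ) (1:k)).support := by
    rw [mem_support_iff, MvPolynomial.coeff_mul_monomial, mul_one]
    exact mem_support_iff.1 hd
  obtain ⟨a, hle⟩ := mem_pathIdeal_iff.1 h _ hs
  obtain ⟨u, hu, hue⟩ := hC a
  rw [indF_le_iff] at hle
  have := hle u hue
  rw [Finsupp.add_apply, indF_apply, if_neg (by simp [hu])] at this
  calc 1 ≤ d u := by omega
  _ ≤ W C d := Finset.single_le_sum (f := (d ·)) (fun _ _ => Nat.zero_le _) hu

lemma isAssociated_P {C : Finset (ZMod n)} (hC : IsMinCover n t C) :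
    IsAssociatedPrime (P k C) (MvPolynomial (ZMod n) k ⧸ pathIdeal k n t) := by
  classical
  refine isAssociatedPrime_iff.2 ⟨P_isPrime C, Ideal.Quotient.mk _ (monomial (indF Cᶜ) 1), ?_⟩
  ext r
  rw [Submodule.mem_colon_singleton, Submodule.mem_bot]
  have hsmul : r • (Ideal.Quotient.mk (pathIdeal k n t) (monomial (indF Cᶜ) 1))
      = Ideal.Quotient.mk (pathIdeal k n t) (r * monomial (indF Cᶜ) 1) := rfl
  rw [hsmul, Ideal.Quotient.eq_zero_iff_mem]
  constructor
  · intro hr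
    rw [P] at hr
    -- r ∈ span (X '' C) ⟹ r * fC ∈ I
    have hcolon : Ideal.span ((fun v => (X v : MvPolynomial (ZMod n) k)) '' ↑C)
        ≤ Submodule.colon (pathIdeal k n t) (Ideal.span {(monomial (indF Cᶜ) 1 : MvPolynomial (ZMod n) k)}) := by
      rw [Ideal.span_le]
      rintro y ⟨v, hv, rfl⟩
      rw [SetLike.mem_coe, Ideal.mem_colon_span_singleton]
      exact X_mul_fC_mem hC hv
    have := hcolon hr
    rwa [Ideal.mem_colon_span_singleton] at this
  · exact mem_P_of_mul_fC_mem hC.1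

lemma assoc_prime_eq {p : Ideal (MvPolynomial (ZMod n) k)}
    (hp : p ∈ associatedPrimes (MvPolynomial (ZMod n) k)
      (MvPolynomial (ZMod n) k ⧸ pathIdeal k n t)) :
    ∃ C, IsMinCover n t C ∧ p = P k C := by
  classical
  obtain ⟨hprime, x, hx⟩ := isAssociatedPrime_iff.1 hp
  obtain ⟨f, rfl⟩ := Ideal.Quotient.mk_surjective x
  have hmem : ∀ r, r ∈ p ↔ r * f ∈ pathIdeal k n t := by
    intro r
    rw [hx, Submodule.mem_colon_singleton, Submodule.mem_bot]
    have hsmul : r • (Ideal.Quotient.mk (pathIdeal k n t) f)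
        = Ideal.Quotient.mk (pathIdeal k n t) (r * f) := rfl
    rw [hsmul, Ideal.Quotient.eq_zero_iff_mem]
  let MC : Finset (Finset (ZMod n)) :=
    Finset.univ.filter (fun C => IsMinCover n t C ∧ f ∉ P k C)
  have hprod : ∏ C ∈ MC, P k C ≤ p := by
    intro y hy
    rw [hmem]
    rw [mul_comm]
    apply inf_minCovers_le
    intro C hCmin
    by_cases hf : f ∈ P k C
    · exact Ideal.mul_mem_right _ _ hf
    · have h1 : ∏ C' ∈ MC, P k C' ≤ P k C :=
        le_trans Ideal.prod_le_inf (Finset.inf_le (by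
          simp only [MC, Finset.mem_filter, Finset.mem_univ, true_and]
          exact ⟨hCmin, hf⟩))
      exact Ideal.mul_mem_left _ _ (h1 hy)
  obtain ⟨C, hCmem, hle⟩ := (hprime.prod_le).1 hprod
  simp only [MC, Finset.mem_filter, Finset.mem_univ, true_and] at hCmem
  refine ⟨C, hCmem.1, le_antisymm ?_ hle⟩
  intro r hr
  rw [hmem] at hr
  have : r * f ∈ P k C := pathIdeal_le_P hCmem.1.1 hr
  exact ((P_isPrime C).mem_or_mem this).resolve_right hCmem.2

end Assoc

end Stmt14

namespace Stmt14

section Symbolic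

variable {k : Type*} [Field k] {n t : ℕ} [NeZero n]

lemma mem_symbolicPower_of {R : Type*} [CommRing R] {I : Ideal R} {m : ℕ} {g : R}
    (h : ∀ p, p.IsPrime → p ∈ associatedPrimes R (R ⧸ I) → ∃ s, s ∉ p ∧ s * g ∈ I ^ m) :
    g ∈ symbolicPower I m := by
  apply Submodule.mem_sInf.2
  rintro J ⟨p, hp, hass, rfl⟩
  obtain ⟨s, hs, hsg⟩ := h p hp hass
  rw [Ideal.mem_comap]
  have hu : IsUnit (algebraMap R (Localization p.primeCompl) s) :=
    IsLocalization.map_units (M := p.primeCompl) _ ⟨s, hs⟩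
  rw [← Ideal.unit_mul_mem_iff_mem _ hu, ← map_mul]
  exact Ideal.mem_map_of_mem _ hsg

lemma symbolic_le_P_pow {m : ℕ} {f : MvPolynomial (ZMod n) k}
    (hf : f ∈ symbolicPower (pathIdeal k n t) m) {C : Finset (ZMod n)}
    (hC : IsMinCover n t C) : f ∈ (P k C) ^ m := by
  haveI := P_isPrime (k := k) C
  have hass : (P k C) ∈ associatedPrimes (MvPolynomial (ZMod n) k)
      (MvPolynomial (ZMod n) k ⧸ pathIdeal k n t) := isAssociated_P hC
  have hple : symbolicPower (pathIdeal k n t) m ≤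
      Ideal.comap (algebraMap _ (Localization (P k C).primeCompl))
        (Ideal.map (algebraMap _ (Localization (P k C).primeCompl)) ((pathIdeal k n t) ^ m)) :=
    sInf_le ⟨P k C, P_isPrime C, hass, rfl⟩
  have hf2 := hple hf
  rw [Ideal.mem_comap,
    IsLocalization.mem_map_algebraMap_iff (P k C).primeCompl] at hf2
  obtain ⟨⟨a, s⟩, hfs⟩ := hf2
  have hinj : Function.Injective
      (algebraMap (MvPolynomial (ZMod n) k) (Localization (P k C).primeCompl)) :=
    IsLocalization.injective _ (P k C).primeCompl_le_nonZeroDivisors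
  have heq : f * (s : MvPolynomial (ZMod n) k) = a := hinj (by rw [map_mul]; exact hfs)
  have ha : (a : MvPolynomial (ZMod n) k) ∈ (P k C) ^ m :=
    Ideal.pow_right_mono (pathIdeal_le_P hC.1) m a.2
  rw [← heq] at ha
  apply P_pow_primary (s := (s : MvPolynomial (ZMod n) k)) s.2
  rwa [mul_comm]

end Symbolic

end Stmt14

namespace Stmt14

section Upper

variable {k : Type*} [Field k] {n t : ℕ} [NeZero n]

lemma X_not_mem_P {C : Finset (ZMod n)} {u : ZMod n} (hu : u ∉ C) :
    (X u : MvPolynomial (ZMod n) k) ∉ P k C := by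
  classical
  rw [mem_P_iff]
  push_neg
  refine ⟨Finsupp.single u 1, ?_, ?_⟩
  · rw [X, mem_support_iff, coeff_monomial, if_pos rfl]; exact one_ne_zero
  · rw [W]
    have : ∀ v ∈ C, Finsupp.single u 1 v = 0 := by
      intro v hv
      rw [Finsupp.single_apply, if_neg (fun h => hu (by rw [h]; exact hv))]
    rw [Finset.sum_eq_zero this]
    omega

lemma exists_s {C : Finset (ZMod n)} (hC : IsMinCover n t C) :
    ∃ s : MvPolynomial (ZMod n) k, s ∉ P k C ∧
      ∀ j y, y ∈ (P k C) ^ j → s ^ j * y ∈ (pathIdeal k n t) ^ j := by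
  classical
  haveI := P_isPrime (k := k) C
  -- for each v ∈ C, an edge meeting C only in v
  have hedge : ∀ v ∈ C, ∃ a : ZMod n, v ∈ Edge n t a ∧ ∀ u ∈ Edge n t a, u ≠ v → u ∉ C := by
    intro v hv
    have hnc := hC.2 v hv
    rw [IsCover] at hnc
    push_neg at hnc
    obtain ⟨a, ha⟩ := hnc
    have hvE : v ∈ Edge n t a := by
      obtain ⟨u, hu, hue⟩ := hC.1 a
      have huv : u = v := by
        by_contra hne
        exact (ha u (Finset.mem_erase.2 ⟨hne, hu⟩)) hue
      exact huv ▸ hue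
    exact ⟨a, hvE, fun u hu hne huC => (ha u (Finset.mem_erase.2 ⟨hne, huC⟩)) hu⟩
  choose a hav haC using hedge
  let sv : ∀ v ∈ C, MvPolynomial (ZMod n) k :=
    fun v hv => ∏ u ∈ (Edge n t (a v hv)).erase v, X u
  refine ⟨∏ v ∈ C.attach, sv v v.2, ?_, ?_⟩
  · -- not in the prime
    intro hmem
    have := (Ideal.IsPrime.prod_mem_iff).1 hmem
    obtain ⟨v, _, hvmem⟩ := this
    have := (Ideal.IsPrime.prod_mem_iff).1 hvmem
    obtain ⟨u, hu, humem⟩ := this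
    have hune : u ≠ (v : ZMod n) := Finset.ne_of_mem_erase hu
    have huE : u ∈ Edge n t (a v v.2) := Finset.mem_of_mem_erase hu
    exact X_not_mem_P (haC v v.2 u huE hune) humem
  · -- the multiplier property
    have hkey : ∀ y ∈ P k C, (∏ v ∈ C.attach, sv v v.2) * y ∈ pathIdeal k n t := by
      intro y hy
      have hcolon : P k C ≤ Submodule.colon (pathIdeal k n t)
          (Ideal.span {∏ v ∈ C.attach, sv v v.2}) := by
        rw [P, Ideal.span_le]
        rintro z ⟨v, hv, rfl⟩
        rw [SetLike.mem_coe, Ideal.mem_colon_span_singleton]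
        -- X v * ∏ = edge monomial * rest ∈ I
        rw [← Finset.prod_erase_mul C.attach _ (Finset.mem_attach C ⟨v, hv⟩)]
        have hsv : (X v : MvPolynomial (ZMod n) k) * sv v hv ∈ pathIdeal k n t := by
          have : (sv v hv) * X v = ∏ u ∈ Edge n t (a v hv), X u :=
            Finset.prod_erase_mul _ _ (hav v hv)
          rw [mul_comm, this, pathIdeal, edgeIdeal]
          apply Ideal.subset_span
          refine ⟨Edge n t (a v hv), ?_, rfl⟩
          rw [Finset.mem_coe, pathHyperedges, Finset.mem_image]
          exact ⟨a v hv, Finset.mem_univ _, rfl⟩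
        have heq : X v * ((∏ u ∈ C.attach.erase ⟨v, hv⟩, sv u u.2) * sv v hv)
            = (∏ u ∈ C.attach.erase ⟨v, hv⟩, sv u u.2) * (X v * sv v hv) := by ring
        rw [heq]
        exact Ideal.mul_mem_left _ _ hsv
      have := hcolon hy
      rw [Ideal.mem_colon_span_singleton] at this
      rwa [mul_comm]
    intro j
    induction j with
    | zero => intro y hy; simpa using hy
    | succ j ih =>
        intro y hy
        rw [pow_succ (P k C)] at hy
        refine Submodule.mul_induction_on hy ?_ ?_
        · intro z hz w hw
          have h1 := ih z hz
          have h2 := hkey w hw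
          have : (∏ v ∈ C.attach, sv v v.2) ^ (j + 1) * (z * w) =
              ((∏ v ∈ C.attach, sv v v.2) ^ j * z) *
              ((∏ v ∈ C.attach, sv v v.2) * w) := by ring
          rw [this, pow_succ]
          exact Ideal.mul_mem_mul h1 h2
        · intro z w hz hw
          have : (∏ v ∈ C.attach, sv v v.2) ^ (j + 1) * (z + w) =
              (∏ v ∈ C.attach, sv v v.2) ^ (j + 1) * z +
              (∏ v ∈ C.attach, sv v v.2) ^ (j + 1) * w := by ring
          rw [this]
          exact Ideal.add_mem _ hz hw

end Upper

end Stmt14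

namespace Stmt14

section Comb

variable {n t M : ℕ} [NeZero n]

lemma zmod_natCast_inj {a b : ℕ} (ha : a < n) (hb : b < n) (h : (a : ZMod n) = b) : a = b := by
  rw [← ZMod.val_cast_of_lt ha, ← ZMod.val_cast_of_lt hb, h]

lemma natCast_sub_n {c : ℕ} (hc : n ≤ c) : ((c : ℕ) : ZMod n) = ((c - n : ℕ) : ZMod n) := by
  have h : c - n + n = c := by omega
  calc (c : ZMod n) = ((c - n + n : ℕ) : ZMod n) := by rw [h]
  _ = ((c - n : ℕ) : ZMod n) + ((n : ℕ) : ZMod n) := by push_cast; ring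
  _ = ((c - n : ℕ) : ZMod n) := by rw [ZMod.natCast_self, add_zero]

lemma card_edge_filter (htn : t ≤ n) (v : ZMod n) :
    (Finset.univ.filter fun a => v ∈ Edge n t a).card = t := by
  classical
  have himg : (Finset.univ.filter fun a => v ∈ Edge n t a)
      = Finset.image (fun l : Fin t => v - ((l : ℕ) : ZMod n)) Finset.univ := by
    ext a
    simp only [Finset.mem_filter, Finset.mem_univ, true_and, Finset.mem_image]
    rw [mem_Edge]
    constructor
    · rintro ⟨l, hl, hv⟩
      exact ⟨⟨l, hl⟩, by rw [hv]; ring⟩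
    · rintro ⟨l, rfl⟩
      exact ⟨l, l.2, by ring⟩
  rw [himg, Finset.card_image_of_injective _ ?_, Finset.card_univ, Fintype.card_fin]
  intro l l' h
  have h2 : ((l : ℕ) : ZMod n) = ((l' : ℕ) : ZMod n) := by
    have := sub_right_injective (G := ZMod n) h
    exact this
  exact Fin.ext (zmod_natCast_inj (lt_of_lt_of_le l.2 htn) (lt_of_lt_of_le l'.2 htn) h2)

lemma cover_card (ht : 1 ≤ t) (htn : t ≤ n) {C : Finset (ZMod n)} (hC : IsCover n t C) :
    n ≤ t * C.card := by
  classical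
  have h1 : (n : ℕ) = ∑ _a : ZMod n, 1 := by
    rw [Finset.sum_const, smul_eq_mul, mul_one, Finset.card_univ, ZMod.card]
  have h2 : ∀ a : ZMod n, 1 ≤ (C.filter fun v => v ∈ Edge n t a).card := by
    intro a
    obtain ⟨u, hu, hue⟩ := hC a
    exact Finset.card_pos.2 ⟨u, Finset.mem_filter.2 ⟨hu, hue⟩⟩
  calc n = ∑ _a : ZMod n, 1 := h1
  _ ≤ ∑ a : ZMod n, (C.filter fun v => v ∈ Edge n t a).card :=
      Finset.sum_le_sum fun a _ => h2 a
  _ = ∑ a : ZMod n, ∑ v ∈ C, if v ∈ Edge n t a then 1 else 0 := by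
      refine Finset.sum_congr rfl fun a _ => ?_
      rw [Finset.card_filter]
  _ = ∑ v ∈ C, ∑ a : ZMod n, if v ∈ Edge n t a then 1 else 0 := Finset.sum_comm
  _ = ∑ v ∈ C, t := by
      refine Finset.sum_congr rfl fun v _ => ?_
      rw [← Finset.card_filter]
      exact card_edge_filter htn v
  _ = t * C.card := by rw [Finset.sum_const, smul_eq_mul, mul_comm]

/-- the shifted covers -/
def Cov (n t M : ℕ) [NeZero n] (i : ZMod n) : Finset (ZMod n) :=
  Finset.image (fun j : Fin M => i + ((j * t : ℕ) : ZMod n)) Finset.univ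

lemma mem_Cov {i u : ZMod n} :
    u ∈ Cov n t M i ↔ ∃ j : ℕ, j < M ∧ u = i + ((j * t : ℕ) : ZMod n) := by
  simp only [Cov, Finset.mem_image, Finset.mem_univ, true_and]
  constructor
  · rintro ⟨j, rfl⟩; exact ⟨j, j.2, rfl⟩
  · rintro ⟨j, hj, rfl⟩; exact ⟨⟨j, hj⟩, rfl⟩

lemma card_cov_filter (ht : 1 ≤ t) (hM2 : M * t < n + t) (v : ZMod n) :
    (Finset.univ.filter fun i => v ∈ Cov n t M i).card = M := by
  classical
  have himg : (Finset.univ.filter fun i => v ∈ Cov n t M i)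
      = Finset.image (fun j : Fin M => v - ((j * t : ℕ) : ZMod n)) Finset.univ := by
    ext i
    simp only [Finset.mem_filter, Finset.mem_univ, true_and, Finset.mem_image]
    rw [mem_Cov]
    constructor
    · rintro ⟨j, hj, hv⟩
      exact ⟨⟨j, hj⟩, by rw [hv]; ring⟩
    · rintro ⟨j, rfl⟩
      exact ⟨j, j.2, by ring⟩
  rw [himg, Finset.card_image_of_injective _ ?_, Finset.card_univ, Fintype.card_fin]
  intro j j' h
  have h2 : (((j : ℕ) * t : ℕ) : ZMod n) = (((j' : ℕ) * t : ℕ) : ZMod n) :=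
    sub_right_injective (G := ZMod n) h
  have hjn : (j : ℕ) * t < n := by
    have := j.2
    nlinarith
  have hj'n : (j' : ℕ) * t < n := by
    have := j'.2
    nlinarith
  have := zmod_natCast_inj hjn hj'n h2
  have : (j : ℕ) = (j' : ℕ) := by
    have ht0 : t ≠ 0 := by omega
    exact Nat.eq_of_mul_eq_mul_right (by omega) this
  exact Fin.ext this

end Comb

end Stmt14

namespace Stmt14

section Comb2

variable {n t M : ℕ} [NeZero n]

lemma zmod_eq_cases {x y : ℕ} (hx : x < n) (hy : y < 2 * n) (h : (x : ZMod n) = y) :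
    (y < n ∧ x = y) ∨ (n ≤ y ∧ x = y - n) := by
  rcases le_or_gt n y with hc | hc
  · right
    rw [natCast_sub_n hc] at h
    exact ⟨hc, zmod_natCast_inj hx (by omega) h⟩
  · left
    exact ⟨hc, zmod_natCast_inj hx hc h⟩

lemma cov_isCover (ht : 1 ≤ t) (htn : t ≤ n) (hM1 : n ≤ M * t) (i : ZMod n) :
    IsCover n t (Cov n t M i) := by
  intro a
  have hn1 : 1 ≤ n := Nat.one_le_iff_ne_zero.2 (NeZero.ne n)
  have hM0 : 0 < M := by
    rcases Nat.eq_zero_or_pos M with h | h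
    · rw [h, zero_mul] at hM1; omega
    · exact h
  set b : ℕ := (a - i).val with hb
  have hbn : b < n := ZMod.val_lt _
  have hab : a = i + ((b : ℕ) : ZMod n) := by
    rw [hb]
    have : ((a - i).val : ZMod n) = a - i := by
      rw [ZMod.natCast_val, ZMod.cast_id]
    rw [this]; ring
  have key : ∃ j l : ℕ, j < M ∧ l < t ∧ ((j * t : ℕ) : ZMod n) = ((b + l : ℕ) : ZMod n) := by
    rcases Nat.eq_zero_or_pos b with hb0 | hb0
    · refine ⟨0, 0, by omega, by omega, by rw [hb0]; norm_num⟩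
    rcases le_or_gt (b + t) n with hc | hc
    · -- b + t ≤ n : interior case
      set j : ℕ := (b - 1) / t + 1 with hj
      have hjt : j * t = ((b - 1) / t) * t + t := by rw [hj, add_mul, one_mul]
      have hdm : ((b - 1) / t) * t + (b - 1) % t = b - 1 := by
        rw [mul_comm]; exact Nat.div_add_mod (b - 1) t
      have hmod := Nat.mod_lt (b - 1) (show 0 < t by omega)
      have hj2 : b ≤ j * t := by omega
      have hj3 : j * t ≤ b + t - 1 := by omega
      have hjM : j < M := by
        have hlt : j * t < M * t := by omega
        exact lt_of_mul_lt_mul_right hlt (Nat.zero_le t)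
      refine ⟨j, j * t - b, hjM, by omega, ?_⟩
      congr 1
      omega
    · -- wrap-around case
      refine ⟨0, n - b, by omega, by omega, ?_⟩
      have h1 : b + (n - b) = n := by omega
      rw [h1]
      simp
  obtain ⟨j, l, hjM, hlt, heq⟩ := key
  refine ⟨i + ((j * t : ℕ) : ZMod n), mem_Cov.2 ⟨j, hjM, rfl⟩, mem_Edge.2 ⟨l, hlt, ?_⟩⟩
  rw [hab, heq]
  push_cast
  ring

lemma cov_isMinCover (ht : 1 ≤ t) (htn : t ≤ n) (hM1 : n ≤ M * t) (hM2 : M * t < n + t)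
    (hM : 1 ≤ M) (i : ZMod n) : IsMinCover n t (Cov n t M i) := by
  refine ⟨cov_isCover ht htn hM1 i, ?_⟩
  intro v hv hcov
  have hn1 : 1 ≤ n := Nat.one_le_iff_ne_zero.2 (NeZero.ne n)
  obtain ⟨j₀, hj₀, rfl⟩ := mem_Cov.1 hv
  have hMtt : (M - 1) * t + t = M * t := by
    have h : M - 1 + 1 = M := by omega
    calc (M - 1) * t + t = (M - 1 + 1) * t := by ring
    _ = M * t := by rw [h]
  have hMt : (M - 1) * t < n := by omega
  have hj0le : j₀ * t ≤ (M - 1) * t := Nat.mul_le_mul_right t (by omega)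
  set c₀ : ℕ := if 1 ≤ j₀ then (j₀ - 1) * t + 1 else (M - 1) * t + 1 with hc₀
  obtain ⟨u, hu, huE⟩ := hcov (i + ((c₀ : ℕ) : ZMod n))
  rw [Finset.mem_erase] at hu
  obtain ⟨hne, humem⟩ := hu
  obtain ⟨j, hj, rfl⟩ := mem_Cov.1 humem
  obtain ⟨l, hl, heq⟩ := mem_Edge.1 huE
  have heq2 : ((j * t : ℕ) : ZMod n) = ((c₀ + l : ℕ) : ZMod n) := by
    have h : i + ((j * t : ℕ) : ZMod n) = i + ((c₀ + l : ℕ) : ZMod n) := by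
      rw [heq]; push_cast; ring
    exact add_right_injective i h
  have hjle : j * t ≤ (M - 1) * t := Nat.mul_le_mul_right t (by omega)
  have hjtn : j * t < n := by omega
  have hjne : j ≠ j₀ := fun h => hne (by rw [h])
  rcases le_or_gt 1 j₀ with h1 | h1
  · -- j₀ ≥ 1
    rw [hc₀, if_pos h1] at heq2
    have hj0tt : (j₀ - 1) * t + t = j₀ * t := by
      have h : j₀ - 1 + 1 = j₀ := by omega
      calc (j₀ - 1) * t + t = (j₀ - 1 + 1) * t := by ring
      _ = j₀ * t := by rw [h]
    have hcl : (j₀ - 1) * t + 1 + l < 2 * n := by omega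
    rcases zmod_eq_cases hjtn hcl heq2 with ⟨hyn, hxy⟩ | ⟨hyn, hxy⟩
    · -- j*t ∈ ((j₀-1)t, j₀t]
      have hj_ge : j₀ ≤ j := by
        by_contra hcc
        push_neg at hcc
        have : j * t ≤ (j₀ - 1) * t := Nat.mul_le_mul_right t (by omega)
        omega
      have hj_le : j ≤ j₀ := Nat.le_of_mul_le_mul_right (by omega) (show 0 < t by omega)
      exact hjne (le_antisymm hj_le hj_ge)
    · omega
  · -- j₀ = 0
    have hj0 : j₀ = 0 := by omega
    rw [hc₀, if_neg (by omega)] at heq2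
    have hjpos : 1 ≤ j := by
      by_contra hcc
      push_neg at hcc
      exact hjne (by omega)
    have hjtge : t ≤ j * t := Nat.le_mul_of_pos_left t (by omega)
    have hcl : (M - 1) * t + 1 + l < 2 * n := by omega
    rcases zmod_eq_cases hjtn hcl heq2 with ⟨hyn, hxy⟩ | ⟨hyn, hxy⟩
    · omega
    · omega

end Comb2

end Stmt14

namespace Stmt14

section Alpha

variable {k : Type*} [Field k] {n t M : ℕ} [NeZero n]

lemma minCover_card (ht : 1 ≤ t) (htn : t ≤ n) (hM2 : M * t < n + t)
    {C : Finset (ZMod n)} (hC : IsMinCover n t C) : M ≤ C.card := by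
  have h := cover_card ht htn hC.1
  by_contra hcc
  push_neg at hcc
  have h2 : t * C.card ≤ t * (M - 1) := Nat.mul_le_mul_left t (by omega)
  have hMtt : (M - 1) * t + t = M * t := by
    have hM : 1 ≤ M := by
      rcases Nat.eq_zero_or_pos M with h0 | h0
      · omega
      · exact h0
    have hh : M - 1 + 1 = M := by omega
    calc (M - 1) * t + t = (M - 1 + 1) * t := by ring
    _ = M * t := by rw [hh]
  have h3 : t * (M - 1) = (M - 1) * t := mul_comm _ _
  omega

lemma sum_W_cov (d : ZMod n →₀ ℕ) (ht : 1 ≤ t) (hM2 : M * t < n + t) :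
    ∑ i : ZMod n, W (Cov n t M i) d = M * ∑ v : ZMod n, d v := by
  classical
  have h1 : ∀ i : ZMod n, W (Cov n t M i) d
      = ∑ v : ZMod n, if v ∈ Cov n t M i then d v else 0 := by
    intro i
    rw [W, Finset.sum_ite_mem, Finset.univ_inter]
  rw [Finset.sum_congr rfl fun i _ => h1 i, Finset.sum_comm]
  rw [Finset.mul_sum]
  refine Finset.sum_congr rfl fun v _ => ?_
  rw [← Finset.sum_filter, Finset.sum_const, smul_eq_mul, card_cov_filter ht hM2]

lemma alpha_lower (ht : 1 ≤ t) (htn : t ≤ n) (hM1 : n ≤ M * t) (hM2 : M * t < n + t)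
    (hM : 1 ≤ M) {m : ℕ} {f : MvPolynomial (ZMod n) k}
    (hf : f ∈ symbolicPower (pathIdeal k n t) m) (hf0 : f ≠ 0) :
    n * m ≤ M * f.totalDegree := by
  classical
  obtain ⟨d, hd⟩ := (MvPolynomial.support_nonempty.2 hf0)
  have hW : ∀ i : ZMod n, m ≤ W (Cov n t M i) d := by
    intro i
    have hmem := symbolic_le_P_pow hf (cov_isMinCover ht htn hM1 hM2 hM i)
    exact mem_P_pow_iff.1 hmem d hd
  have hsum : n * m ≤ ∑ i : ZMod n, W (Cov n t M i) d := by
    calc n * m = ∑ _i : ZMod n, m := by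
          rw [Finset.sum_const, smul_eq_mul, Finset.card_univ, ZMod.card]
    _ ≤ _ := Finset.sum_le_sum fun i _ => hW i
  rw [sum_W_cov d ht hM2] at hsum
  have hdeg : ∑ v : ZMod n, d v ≤ f.totalDegree := by
    have h1 : (d.sum fun _ e => e) ≤ f.totalDegree := le_totalDegree hd
    rw [Finsupp.sum_fintype _ _ (fun _ => rfl)] at h1
    exact h1
  calc n * m ≤ M * ∑ v : ZMod n, d v := hsum
  _ ≤ M * f.totalDegree := Nat.mul_le_mul_left M hdeg

lemma exists_low_degree (ht : 1 ≤ t) (htn : t ≤ n) (hM1 : n ≤ M * t) (hM2 : M * t < n + t)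
    (hM : 1 ≤ M) {m : ℕ} :
    ∃ f ∈ symbolicPower (pathIdeal k n t) m, f ≠ (0 : MvPolynomial (ZMod n) k) ∧
      f.totalDegree = n * (m / M + 1) := by
  classical
  set c : ℕ := m / M + 1 with hc
  set D : ZMod n →₀ ℕ := c • indF (Finset.univ : Finset (ZMod n)) with hD
  have hDv : ∀ v : ZMod n, D v = c := by
    intro v
    rw [hD, Finsupp.smul_apply, indF_apply, if_pos (Finset.mem_univ v), smul_eq_mul, mul_one]
  set g : MvPolynomial (ZMod n) k := monomial D 1 with hg
  have hg0 : g ≠ 0 := by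
    rw [hg]
    intro h
    have := congrArg (coeff D) h
    rw [coeff_monomial, if_pos rfl, coeff_zero] at this
    exact one_ne_zero this
  have hsupp : g.support = {D} := by
    rw [hg, MvPolynomial.support_monomial, if_neg one_ne_zero]
  refine ⟨g, ?_, hg0, ?_⟩
  · apply mem_symbolicPower_of
    intro p hp hass
    obtain ⟨C, hC, rfl⟩ := assoc_prime_eq hass
    obtain ⟨s, hsP, hmult⟩ := exists_s (k := k) hC
    have hcard : M ≤ C.card := minCover_card ht htn hM2 hC
    set N : ℕ := c * C.card with hN
    have hgP : g ∈ (P k C) ^ N := by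
      rw [mem_P_pow_iff]
      intro d hd
      rw [hsupp, Finset.mem_singleton] at hd
      subst hd
      rw [W]
      have : ∀ v ∈ C, D v = c := fun v _ => hDv v
      rw [Finset.sum_congr rfl this, Finset.sum_const, smul_eq_mul, hN]
      exact le_of_eq (mul_comm c C.card)
    have hmN : m ≤ N := by
      have h1 : m < c * M := by
        have := Nat.div_add_mod m M
        have h2 : M * (m / M) + M = c * M := by rw [hc]; ring
        have := Nat.mod_lt m (show 0 < M by omega)
        omega
      have h2 : c * M ≤ c * C.card := Nat.mul_le_mul_left c hcard
      omega
    refine ⟨s ^ N, ?_, ?_⟩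
    · intro hmem
      have hNpos : 0 < N := by
        rw [hN]
        have : 1 ≤ C.card := le_trans hM hcard
        positivity
      exact hsP ((hp.pow_mem_iff_mem N hNpos).1 hmem)
    · have := hmult N g hgP
      exact Ideal.pow_le_pow_right hmN this
  · rw [hg, totalDegree_monomial _ one_ne_zero, Finsupp.sum_fintype _ _ (fun _ => rfl)]
    have : ∀ v : ZMod n, D v = c := hDv
    rw [Finset.sum_congr rfl (fun v _ => hDv v), Finset.sum_const, smul_eq_mul,
      Finset.card_univ, ZMod.card]

end Alpha

end Stmt14

namespace Stmt14

section Final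

variable {k : Type*} [Field k] {n t M : ℕ} [NeZero n]

lemma alpha_upper_bound (ht : 1 ≤ t) (htn : t ≤ n) (hM1 : n ≤ M * t) (hM2 : M * t < n + t)
    (hM : 1 ≤ M) (m : ℕ) :
    alphaIdeal (symbolicPower (pathIdeal k n t) m) ≤ n * (m / M + 1) := by
  obtain ⟨f, hf, hf0, hdeg⟩ := exists_low_degree (k := k) ht htn hM1 hM2 hM (m := m)
  exact Nat.sInf_le ⟨f, hf, hf0, hdeg⟩

lemma alpha_lower_bound (ht : 1 ≤ t) (htn : t ≤ n) (hM1 : n ≤ M * t) (hM2 : M * t < n + t)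
    (hM : 1 ≤ M) (m : ℕ) :
    n * m ≤ M * alphaIdeal (symbolicPower (pathIdeal k n t) m) := by
  obtain ⟨f, hf, hf0, hdeg⟩ := exists_low_degree (k := k) ht htn hM1 hM2 hM (m := m)
  have hne : {d : ℕ | ∃ g ∈ symbolicPower (pathIdeal k n t) m,
      g ≠ (0 : MvPolynomial (ZMod n) k) ∧ g.totalDegree = d}.Nonempty :=
    ⟨_, f, hf, hf0, hdeg⟩
  obtain ⟨f', hf', hf0', hdeg'⟩ := Nat.sInf_mem hne
  rw [alphaIdeal, ← hdeg']
  exact alpha_lower ht htn hM1 hM2 hM hf' hf0'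

lemma tendsto_alpha (ht : 1 ≤ t) (htn : t ≤ n) (hM1 : n ≤ M * t) (hM2 : M * t < n + t)
    (hM : 1 ≤ M) :
    Filter.Tendsto
      (fun m : ℕ => (alphaIdeal (symbolicPower (pathIdeal k n t) m) : ℝ) / m)
      Filter.atTop (nhds ((n : ℝ) / (M : ℝ))) := by
  have hn1 : 1 ≤ n := Nat.one_le_iff_ne_zero.2 (NeZero.ne n)
  have hMR : (0 : ℝ) < M := by exact_mod_cast hM
  have hupper : Filter.Tendsto (fun m : ℕ => (n : ℝ) / M + (n : ℝ) / m)
      Filter.atTop (nhds ((n : ℝ) / M)) := by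
    have h0 : Filter.Tendsto (fun m : ℕ => (n : ℝ) / m) Filter.atTop (nhds 0) := by
      have := tendsto_one_div_atTop_nhds_zero_nat.const_mul (n : ℝ)
      simp only [mul_one_div] at this
      simpa using this
    have := (tendsto_const_nhds (x := (n : ℝ) / M) (f := Filter.atTop (α := ℕ))).add h0
    simpa using this
  apply tendsto_of_tendsto_of_tendsto_of_le_of_le' tendsto_const_nhds hupper
  · -- lower bound eventually
    filter_upwards [Filter.eventually_ge_atTop 1] with m hm
    have hmR : (0 : ℝ) < m := by exact_mod_cast hm
    rw [div_le_div_iff₀ hMR hmR]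
    have := alpha_lower_bound (k := k) ht htn hM1 hM2 hM m
    have hcast : (n : ℝ) * m ≤ M * (alphaIdeal (symbolicPower (pathIdeal k n t) m) : ℝ) := by
      exact_mod_cast this
    linarith
  · -- upper bound eventually
    filter_upwards [Filter.eventually_ge_atTop 1] with m hm
    have hmR : (0 : ℝ) < m := by exact_mod_cast hm
    have h1 : (alphaIdeal (symbolicPower (pathIdeal k n t) m) : ℝ)
        ≤ (n : ℝ) * ((m / M : ℕ) : ℝ) + n := by
      have := alpha_upper_bound (k := k) ht htn hM1 hM2 hM m
      have hcast : (alphaIdeal (symbolicPower (pathIdeal k n t) m) : ℝ)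
          ≤ (n : ℝ) * (((m / M : ℕ) : ℝ) + 1) := by exact_mod_cast this
      linarith
    have h2 : ((m / M : ℕ) : ℝ) ≤ (m : ℝ) / M := Nat.cast_div_le
    have h3 : (alphaIdeal (symbolicPower (pathIdeal k n t) m) : ℝ) / m
        ≤ ((n : ℝ) * ((m : ℝ) / M) + n) / m := by
      gcongr
      have hn0 : (0:ℝ) ≤ (n : ℝ) := Nat.cast_nonneg n
      nlinarith
    have h4 : ((n : ℝ) * ((m : ℝ) / M) + n) / m = (n : ℝ) / M + (n : ℝ) / m := by
      field_simp
    rw [h4] at h3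
    exact h3

end Final

end Stmt14

/-- the Waldschmidt constant of the t-path ideal of the cycle Cₙ,
where n = t*q + r with 0 ≤ r < t, equals t if r = 0 and n/(q+1) otherwise. -/
theorem stmt14 {k : Type*} [Field k] (n t q r : ℕ) [NeZero n] (hn : 2 ≤ n)
    (ht : 2 ≤ t) (htn : t ≤ n) (hq : n = t * q + r) (hr : r < t) :
    Filter.Tendsto
      (fun m : ℕ =>
        (alphaIdeal (symbolicPower (edgeIdeal k (pathHyperedges n t)) m) : ℝ) / m)
      Filter.atTop
      (nhds (if r = 0 then (t : ℝ) else (n : ℝ) / ((q : ℝ) + 1))) := by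
  have hq1 : 1 ≤ q := by
    rcases Nat.eq_zero_or_pos q with h0 | h0
    · subst h0; omega
    · exact h0
  set M : ℕ := if r = 0 then q else q + 1 with hM
  have ht1 : 1 ≤ t := by omega
  have hcomm : t * q = q * t := mul_comm t q
  have hM1 : n ≤ M * t := by
    rcases Nat.eq_zero_or_pos r with h0 | h0
    · rw [hM, if_pos h0]; omega
    · rw [hM, if_neg (by omega)]
      have : (q + 1) * t = q * t + t := by ring
      omega
  have hM2 : M * t < n + t := by
    rcases Nat.eq_zero_or_pos r with h0 | h0
    · rw [hM, if_pos h0]; omega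
    · rw [hM, if_neg (by omega)]
      have : (q + 1) * t = q * t + t := by ring
      omega
  have hMpos : 1 ≤ M := by
    rcases Nat.eq_zero_or_pos r with h0 | h0
    · rw [hM, if_pos h0]; omega
    · rw [hM, if_neg (by omega)]; omega
  have hconv := Stmt14.tendsto_alpha (k := k) (n := n) (t := t) (M := M) ht1 htn hM1 hM2 hMpos
  have heq : ((n : ℝ) / (M : ℝ)) = (if r = 0 then (t : ℝ) else (n : ℝ) / ((q : ℝ) + 1)) := by
    rcases Nat.eq_zero_or_pos r with h0 | h0
    · rw [hM, if_pos h0, if_pos h0]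
      have hnq : (n : ℝ) = (t : ℝ) * q := by
        have : n = t * q := by omega
        exact_mod_cast this
      rw [hnq]
      have hq0 : (q : ℝ) ≠ 0 := by positivity
      field_simp
    · rw [hM, if_neg (by omega), if_neg (by omega)]
      push_cast
      ring_nf
  rw [← heq]
  exact hconv
end

section
/- Let n = tq + r with 0 ≤ r ≤ t−1 and 2 ≤ t ≤ n. The fractional chromatic number of the t-path hypergraph H_t(C_n) equals n/(n−q) if r = 0 and n/(n−q−1) if r ≠ 0. -/
/-- fractional chromatic number of a hypergraph on a finite vertex set,
as the optimum of the LP relaxation via fractional covers by independent sets. -/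
noncomputable def fracChromatic {V : Type*} [Fintype V] [DecidableEq V]
    (E : Finset (Finset V)) : ℝ :=
  sInf { s : ℝ | ∃ w : Finset V → ℝ,
    (∀ W, 0 ≤ w W) ∧
    (∀ W, w W ≠ 0 → ∀ e ∈ E, ¬ e ⊆ W) ∧
    (∀ v : V, 1 ≤ ∑ W ∈ Finset.univ.filter (fun W => v ∈ W), w W) ∧
    s = ∑ W : Finset V, w W }

section aux
variable (n t : ℕ) [hnz : NeZero n]

def window (i : ZMod n) : Finset (ZMod n) :=
  Finset.image (fun j : Fin t => i + ((j : ℕ) : ZMod n)) Finset.univ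

lemma mem_pathHyperedges {e : Finset (ZMod n)} :
    e ∈ pathHyperedges n t ↔ ∃ i, e = window n t i := by
  simp [pathHyperedges, window, eq_comm]

variable (htn : t ≤ n)
include hnz htn

lemma cast_inj_fin : Function.Injective (fun j : Fin t => ((j : ℕ) : ZMod n)) := by
  intro a b hab
  apply Fin.ext
  have := congrArg ZMod.val hab
  simpa [ZMod.val_natCast_of_lt (lt_of_lt_of_le a.isLt htn),
    ZMod.val_natCast_of_lt (lt_of_lt_of_le b.isLt htn)] using this

lemma window_card (i : ZMod n) : (window n t i).card = t := by
  rw [window, Finset.card_image_of_injective _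
    (fun a b hab => cast_inj_fin n t htn (add_left_cancel hab))]
  simp

lemma mem_window_count (v : ZMod n) :
    (Finset.univ.filter (fun i : ZMod n => v ∈ window n t i)).card = t := by
  have : Finset.univ.filter (fun i : ZMod n => v ∈ window n t i)
      = Finset.image (fun j : Fin t => v - ((j : ℕ) : ZMod n)) Finset.univ := by
    ext i
    simp only [Finset.mem_filter, Finset.mem_univ, true_and, Finset.mem_image, window]
    constructor
    · rintro ⟨j, hj⟩
      exact ⟨j, by rw [← hj]; ring⟩
    · rintro ⟨j, hj⟩
      exact ⟨j, by rw [← hj]; ring⟩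
  rw [this, Finset.card_image_of_injective _ (fun a b hab => cast_inj_fin n t htn (by
    exact sub_right_injective hab))]
  simp

end aux

-- transversal lower bound
lemma transversal_bound (n t : ℕ) [NeZero n] (htn : t ≤ n) (T : Finset (ZMod n))
    (hT : ∀ i : ZMod n, ∃ b ∈ T, b ∈ window n t i) : n ≤ t * T.card := by
  have key : ∀ i : ZMod n, 1 ≤ (T.filter (fun v => v ∈ window n t i)).card := by
    intro i
    obtain ⟨b, hb, hbw⟩ := hT i
    exact Finset.card_pos.mpr ⟨b, Finset.mem_filter.mpr ⟨hb, hbw⟩⟩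
  have h1 : (n : ℕ) ≤ ∑ i : ZMod n, (T.filter (fun v => v ∈ window n t i)).card := by
    calc n = ∑ _i : ZMod n, 1 := by simp [ZMod.card n]
    _ ≤ _ := Finset.sum_le_sum (fun i _ => key i)
  have h2 : ∑ i : ZMod n, (T.filter (fun v => v ∈ window n t i)).card
      = ∑ v ∈ T, (Finset.univ.filter (fun i : ZMod n => v ∈ window n t i)).card := by
    simp only [Finset.card_filter]
    rw [Finset.sum_comm]
  rw [h2] at h1
  calc n ≤ _ := h1
  _ = ∑ _v ∈ T, t := Finset.sum_congr rfl (fun v _ => mem_window_count n t htn v)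
  _ = t * T.card := by rw [Finset.sum_const, smul_eq_mul, mul_comm]

def blockers (n t c : ℕ) [NeZero n] : Finset (ZMod n) :=
  Finset.image (fun k : Fin c => ((k * t : ℕ) : ZMod n)) Finset.univ

lemma blockers_card (n t c : ℕ) [NeZero n] (ht : 1 ≤ t) (hc2 : (c - 1) * t < n) :
    (blockers n t c).card = c := by
  rw [blockers, Finset.card_image_of_injective, Finset.card_univ, Fintype.card_fin]
  intro a b hab
  have ha : (a : ℕ) * t < n := lt_of_le_of_lt
    (Nat.mul_le_mul_right t (by omega : (a:ℕ) ≤ c - 1)) hc2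
  have hb : (b : ℕ) * t < n := lt_of_le_of_lt
    (Nat.mul_le_mul_right t (by omega : (b:ℕ) ≤ c - 1)) hc2
  have := congrArg ZMod.val hab
  simp only [ZMod.val_natCast_of_lt ha, ZMod.val_natCast_of_lt hb] at this
  exact Fin.ext (Nat.eq_of_mul_eq_mul_right (by omega) this)

lemma mem_blockers_of (n t c : ℕ) [NeZero n] {k : ℕ} (hk : k < c) :
    ((k * t : ℕ) : ZMod n) ∈ blockers n t c :=
  Finset.mem_image.mpr ⟨⟨k, hk⟩, Finset.mem_univ _, rfl⟩

lemma window_meets_blockers (n t c : ℕ) [NeZero n] (ht : 1 ≤ t)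
    (hc1 : n ≤ c * t) (hc3 : 1 ≤ c) (i : ZMod n) :
    ∃ j : Fin t, i + ((j : ℕ) : ZMod n) ∈ blockers n t c := by
  have hn0 : 0 < n := Nat.pos_of_ne_zero (NeZero.ne n)
  have htpos : 0 < t := by omega
  set a := i.val with ha_def
  have ha : a < n := ZMod.val_lt i
  have hi : ((a : ℕ) : ZMod n) = i := ZMod.natCast_rightInverse i
  have hdm : t * (a / t) + a % t = a := Nat.div_add_mod a t
  have hmod : a % t < t := Nat.mod_lt _ htpos
  have hct : c * t = (c - 1) * t + t := by
    nth_rewrite 1 [show c = (c - 1) + 1 from (Nat.succ_pred_eq_of_pos hc3).symm]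
    ring
  by_cases hA : a ≤ (c - 1) * t
  · set m := a / t with hm_def
    have h' : t * m ≤ t * (c - 1) := by rw [mul_comm t (c - 1)]; omega
    have hmc : m ≤ c - 1 := Nat.le_of_mul_le_mul_left h' htpos
    by_cases hs : a % t = 0
    · have key : i + ((0 : ℕ) : ZMod n) = ((m * t : ℕ) : ZMod n) := by
        rw [← hi, ← Nat.cast_add]
        congr 1
        rw [mul_comm m t]; omega
      refine ⟨⟨0, htpos⟩, ?_⟩
      show i + ((0 : ℕ) : ZMod n) ∈ blockers n t c
      rw [key]
      exact mem_blockers_of n t c (by omega)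
    · have h2 : t * m < t * (c - 1) := by rw [mul_comm t (c - 1)]; omega
      have hmc2 : m < c - 1 := Nat.lt_of_mul_lt_mul_left h2
      have key : i + ((t - a % t : ℕ) : ZMod n) = (((m + 1) * t : ℕ) : ZMod n) := by
        rw [← hi, ← Nat.cast_add]
        congr 1
        have hx : (m + 1) * t = t * m + t := by ring
        omega
      refine ⟨⟨t - a % t, by omega⟩, ?_⟩
      show i + ((t - a % t : ℕ) : ZMod n) ∈ blockers n t c
      rw [key]
      exact mem_blockers_of n t c (by omega)
  · have key : i + ((n - a : ℕ) : ZMod n) = ((0 * t : ℕ) : ZMod n) := by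
      rw [← hi, ← Nat.cast_add, show a + (n - a) = n by omega, show 0 * t = 0 by ring]
      simp
    refine ⟨⟨n - a, by omega⟩, ?_⟩
    show i + ((n - a : ℕ) : ZMod n) ∈ blockers n t c
    rw [key]
    exact mem_blockers_of n t c (by omega)

def rot (n : ℕ) [NeZero n] (x : ZMod n) (S : Finset (ZMod n)) : Finset (ZMod n) :=
  Finset.image (fun s => x + s) S

lemma mem_rot (n : ℕ) [NeZero n] (x v : ZMod n) (S : Finset (ZMod n)) :
    v ∈ rot n x S ↔ v - x ∈ S := by
  simp only [rot, Finset.mem_image]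
  constructor
  · rintro ⟨s, hs, rfl⟩; simpa using hs
  · intro h; exact ⟨v - x, h, by ring⟩

lemma rot_card (n : ℕ) [NeZero n] (x : ZMod n) (S : Finset (ZMod n)) :
    (rot n x S).card = S.card :=
  Finset.card_image_of_injective _ (add_right_injective x)

lemma rot_indep (n t c : ℕ) [NeZero n] (ht : 1 ≤ t) (hc1 : n ≤ c * t) (hc3 : 1 ≤ c)
    (x : ZMod n) : ∀ e ∈ pathHyperedges n t, ¬ e ⊆ rot n x ((blockers n t c)ᶜ) := by
  intro e he hsub
  obtain ⟨i, rfl⟩ := (mem_pathHyperedges n t).mp he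
  obtain ⟨j, hj⟩ := window_meets_blockers n t c ht hc1 hc3 (i - x)
  have hmem : i + ((j : ℕ) : ZMod n) ∈ window n t i := by
    rw [window, Finset.mem_image]; exact ⟨j, Finset.mem_univ _, rfl⟩
  have := hsub hmem
  rw [mem_rot] at this
  rw [Finset.mem_compl] at this
  apply this
  have heq : i + ((j : ℕ) : ZMod n) - x = i - x + ((j : ℕ) : ZMod n) := by ring
  rw [heq]
  exact hj

lemma cover_count (n : ℕ) [NeZero n] (v : ZMod n) (S : Finset (ZMod n)) :
    (Finset.univ.filter (fun x : ZMod n => v ∈ rot n x S)).card = S.card := by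
  have : Finset.univ.filter (fun x : ZMod n => v ∈ rot n x S)
      = Finset.image (fun s => v - s) S := by
    ext x
    simp only [Finset.mem_filter, Finset.mem_univ, true_and, mem_rot, Finset.mem_image]
    constructor
    · intro h; exact ⟨v - x, h, by ring⟩
    · rintro ⟨s, hs, rfl⟩; simpa using hs
  rw [this, Finset.card_image_of_injective _ sub_right_injective]

lemma fracChromatic_eq (n t c : ℕ) [NeZero n] (ht : 1 ≤ t) (htn : t ≤ n)
    (hc1 : n ≤ c * t) (hc2 : (c - 1) * t < n) (hc3 : 1 ≤ c) (hcn : c < n)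
    (hceil : ∀ k : ℕ, n ≤ t * k → c ≤ k) :
    fracChromatic (pathHyperedges n t) = (n : ℝ) / ((n : ℝ) - (c : ℝ)) := by
  classical
  set S : Finset (ZMod n) := (blockers n t c)ᶜ with hS
  have hScard : S.card = n - c := by
    rw [hS, Finset.card_compl, blockers_card n t c ht hc2]
    simp [ZMod.card]
  have hA : (0 : ℝ) < (n : ℝ) - c := by
    have : (c : ℝ) < n := by exact_mod_cast hcn
    linarith
  have hAS : ((S.card : ℕ) : ℝ) = (n : ℝ) - c := by
    rw [hScard, Nat.cast_sub hcn.le]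
  apply IsLeast.csInf_eq
  constructor
  · refine ⟨fun W => ((Finset.univ.filter (fun x : ZMod n => rot n x S = W)).card : ℝ)
      / ((n : ℝ) - c), fun W => div_nonneg (Nat.cast_nonneg _) hA.le, ?_, ?_, ?_⟩
    · intro W hW e he hsub
      have hne : (Finset.univ.filter (fun x : ZMod n => rot n x S = W)).Nonempty := by
        rw [← Finset.card_pos]
        rcases Nat.eq_zero_or_pos (Finset.univ.filter
          (fun x : ZMod n => rot n x S = W)).card with h | h
        · exfalso; apply hW; simp only []; rw [h]; simp
        · exact h
      obtain ⟨x, hx⟩ := hne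
      rw [Finset.mem_filter] at hx
      exact rot_indep n t c ht hc1 hc3 x e he (hx.2 ▸ hsub)
    · intro v
      rw [← Finset.sum_div]
      have hfib : (Finset.univ.filter (fun x : ZMod n => v ∈ rot n x S)).card
          = ∑ W ∈ Finset.univ.filter (fun W => v ∈ W),
            (Finset.univ.filter (fun x : ZMod n => rot n x S = W)).card := by
        rw [Finset.card_eq_sum_card_fiberwise
          (f := fun x => rot n x S)
          (t := Finset.univ.filter (fun W => v ∈ W))
          (fun x hx => by
            rw [Finset.mem_coe, Finset.mem_filter] at hx ⊢
            exact ⟨Finset.mem_univ _, hx.2⟩)]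
        apply Finset.sum_congr rfl
        intro W hW
        rw [Finset.mem_filter] at hW
        congr 1
        ext x
        simp only [Finset.mem_filter, Finset.mem_univ, true_and]
        constructor
        · rintro ⟨hv, hr⟩; exact hr
        · rintro hr; exact ⟨hr ▸ hW.2, hr⟩
      have hsum : (∑ W ∈ Finset.univ.filter (fun W => v ∈ W),
          ((Finset.univ.filter (fun x : ZMod n => rot n x S = W)).card : ℝ))
          = (n : ℝ) - c := by
        rw [← Nat.cast_sum, ← hfib, cover_count, hAS]
      rw [hsum, div_self hA.ne']
    · rw [← Finset.sum_div]
      have htot : ∑ W : Finset (ZMod n),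
          (Finset.univ.filter (fun x : ZMod n => rot n x S = W)).card = n := by
        rw [← Finset.card_eq_sum_card_fiberwise
          (f := fun x => rot n x S) (t := Finset.univ) (fun x _ => Finset.mem_univ _)]
        simp [ZMod.card]
      rw [← Nat.cast_sum, htot]
  · rintro y ⟨w, hw0, hind, hcov, rfl⟩
    rw [div_le_iff₀ hA]
    have key : (n : ℝ) ≤ ((n : ℝ) - c) * ∑ W : Finset (ZMod n), w W := by
      calc (n : ℝ) = ∑ _v : ZMod n, (1 : ℝ) := by simp [ZMod.card]
      _ ≤ ∑ v : ZMod n, ∑ W ∈ Finset.univ.filter (fun W => v ∈ W), w W :=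
          Finset.sum_le_sum (fun v _ => hcov v)
      _ = ∑ W : Finset (ZMod n), (W.card : ℝ) * w W := by
          simp only [Finset.sum_filter]
          rw [Finset.sum_comm]
          apply Finset.sum_congr rfl
          intro W _
          rw [← Finset.sum_filter, Finset.filter_univ_mem, Finset.sum_const,
            nsmul_eq_mul]
      _ ≤ ∑ W : Finset (ZMod n), ((n : ℝ) - c) * w W := by
          apply Finset.sum_le_sum
          intro W _
          by_cases hW : w W = 0
          · rw [hW]; ring_nf; rfl
          · apply mul_le_mul_of_nonneg_right _ (hw0 W)
            have hT : ∀ i : ZMod n, ∃ b ∈ Wᶜ, b ∈ window n t i := by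
              intro i
              have := hind W hW (window n t i) ((mem_pathHyperedges n t).mpr ⟨i, rfl⟩)
              obtain ⟨b, hbw, hbW⟩ := Finset.not_subset.mp this
              exact ⟨b, Finset.mem_compl.mpr hbW, hbw⟩
            have h1 : n ≤ t * (Wᶜ).card := transversal_bound n t htn Wᶜ hT
            have h2 : c ≤ (Wᶜ).card := hceil _ h1
            have h3 : W.card + (Wᶜ).card = n := by
              rw [Finset.card_add_card_compl]
              simp [ZMod.card]
            have h4 : W.card ≤ n - c := by omega
            calc (W.card : ℝ) ≤ ((n - c : ℕ) : ℝ) := by exact_mod_cast h4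
            _ = (n : ℝ) - c := by rw [Nat.cast_sub hcn.le]
      _ = ((n : ℝ) - c) * ∑ W : Finset (ZMod n), w W := by rw [Finset.mul_sum]
    linarith [key]

/-- the fractional chromatic number of the t-path hypergraph of Cₙ,
where n = t*q + r with 0 ≤ r < t, equals n/(n-q) if r = 0 and n/(n-q-1) otherwise. -/
theorem stmt15 (n t q r : ℕ) [NeZero n] (hn : 2 ≤ n) (ht : 2 ≤ t) (htn : t ≤ n)
    (hq : n = t * q + r) (hr : r < t) :
    fracChromatic (pathHyperedges n t) =
      if r = 0 then (n : ℝ) / ((n : ℝ) - (q : ℝ))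
      else (n : ℝ) / ((n : ℝ) - (q : ℝ) - 1) := by

  have hq1 : 1 ≤ q := by
    rcases Nat.eq_zero_or_pos q with rfl | h
    · simp at hq; omega
    · exact h
  have h2q : 2 * q ≤ t * q := Nat.mul_le_mul_right q ht
  by_cases hr0 : r = 0
  · subst hr0
    rw [if_pos rfl]
    have hc1 : n ≤ q * t := by rw [mul_comm]; omega
    have hc2 : (q - 1) * t < n := by
      have h1 : (q - 1) * t + t = q * t := by
        have h0 : q - 1 + 1 = q := Nat.succ_pred_eq_of_pos hq1
        calc (q - 1) * t + t = (q - 1 + 1) * t := by ring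
        _ = q * t := by rw [h0]
      have h2 : q * t = t * q := mul_comm q t
      omega
    have hcn : q < n := by omega
    have hceil : ∀ k : ℕ, n ≤ t * k → q ≤ k := by
      intro k hk
      have h1 : t * q ≤ t * k := by omega
      exact Nat.le_of_mul_le_mul_left h1 (by omega)
    exact fracChromatic_eq n t q (by omega) htn hc1 hc2 hq1 hcn hceil
  · rw [if_neg hr0]
    have hc1 : n ≤ (q + 1) * t := by
      have h1 : (q + 1) * t = t * q + t := by ring
      omega
    have hc2 : (q + 1 - 1) * t < n := by
      have h1 : (q + 1 - 1) * t = t * q := by rw [Nat.add_sub_cancel]; ring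
      omega
    have hcn : q + 1 < n := by omega
    have hceil : ∀ k : ℕ, n ≤ t * k → q + 1 ≤ k := by
      intro k hk
      have h1 : t * q < t * k := by omega
      exact Nat.lt_of_mul_lt_mul_left h1
    have := fracChromatic_eq n t (q + 1) (by omega) htn hc1 hc2 (by omega) hcn hceil
    rw [this]
    push_cast
    ring_nf
end

section
/- Let H be a 3-uniform 3-partite hypergraph, I = I(H), and suppose X^a is a monomial with X^a ∈ I^(2) \ I^2. Then H contains three distinct pairwise intersecting hyperedges e, e', e'' each dividing X^a (as monomials) such that |e ∩ e' ∩ e''| ≤ 1. -/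
open MvPolynomial

set_option linter.unusedSectionVars false

namespace Stmt16Aux

set_option linter.unusedSectionVars false
variable {k V : Type*} [Field k] [Fintype V] [DecidableEq V]

noncomputable def ind (e : Finset V) : V →₀ ℕ := ∑ x ∈ e, Finsupp.single x 1

lemma ind_apply (e : Finset V) (u : V) : ind e u = if u ∈ e then 1 else 0 := by
  classical
  rw [ind, Finset.sum_apply']
  simp [Finsupp.single_apply]

lemma prod_X_eq (e : Finset V) :
    (∏ x ∈ e, (X x : MvPolynomial V k)) = monomial (ind e) 1 := by
  classical
  induction e using Finset.induction_on with
  | empty => simp [ind]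
  | insert _ _ h ih =>
      rw [Finset.prod_insert h, ih]
      simp only [ind]
      rw [Finset.sum_insert h, X, monomial_mul, one_mul]

lemma edgeIdeal_eq (E : Finset (Finset V)) :
    edgeIdeal k E =
      Ideal.span ((fun s => monomial s (1 : k)) '' (ind '' (E : Set (Finset V)))) := by
  rw [edgeIdeal, Set.image_image]
  congr 1
  exact Set.image_congr fun e _ => prod_X_eq e

lemma mem_edgeIdeal_iff {E : Finset (Finset V)} {p : MvPolynomial V k} :
    p ∈ edgeIdeal k E ↔ ∀ b ∈ p.support, ∃ e ∈ E, ind e ≤ b := by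
  rw [edgeIdeal_eq, mem_ideal_span_monomial_image]
  refine forall₂_congr fun b hb => ?_
  constructor
  · rintro ⟨si, ⟨e, he, rfl⟩, h⟩
    exact ⟨e, he, h⟩
  · rintro ⟨e, he, h⟩
    exact ⟨ind e, ⟨e, he, rfl⟩, h⟩

lemma mem_sq_iff {E : Finset (Finset V)} {p : MvPolynomial V k} :
    p ∈ (edgeIdeal k E) ^ 2 ↔
      ∀ b ∈ p.support, ∃ e ∈ E, ∃ f ∈ E, ind e + ind f ≤ b := by
  have h2 : (edgeIdeal k E) ^ 2 =
      Ideal.span ((fun s => monomial s (1 : k)) ''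
        {s | ∃ e ∈ E, ∃ f ∈ E, s = ind e + ind f}) := by
    rw [pow_two, edgeIdeal_eq, Ideal.span_mul_span']
    congr 1
    ext z
    constructor
    · rintro ⟨_, ⟨_, ⟨e, he, rfl⟩, rfl⟩, _, ⟨_, ⟨f, hf, rfl⟩, rfl⟩, rfl⟩
      exact ⟨ind e + ind f, ⟨e, he, f, hf, rfl⟩, by simp [monomial_mul]⟩
    · rintro ⟨s, ⟨e, he, f, hf, rfl⟩, rfl⟩
      refine ⟨monomial (ind e) 1, ⟨ind e, ⟨e, he, rfl⟩, rfl⟩,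
        monomial (ind f) 1, ⟨ind f, ⟨f, hf, rfl⟩, rfl⟩, ?_⟩
      simp [monomial_mul]
  rw [h2, mem_ideal_span_monomial_image]
  refine forall₂_congr fun b hb => ?_
  constructor
  · rintro ⟨si, ⟨e, he, f, hf, rfl⟩, h⟩
    exact ⟨e, he, f, hf, h⟩
  · rintro ⟨e, he, f, hf, h⟩
    exact ⟨ind e + ind f, ⟨e, he, f, hf, rfl⟩, h⟩

def IsCover (E : Finset (Finset V)) (C : Finset V) : Prop :=
  ∀ e ∈ E, (e ∩ C).Nonempty

lemma exists_min_cover (E : Finset (Finset V)) (C : Finset V) (h : IsCover E C) :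
    ∃ C' ⊆ C, IsCover E C' ∧ ∀ c ∈ C', ∃ e ∈ E, e ∩ C' ⊆ {c} := by
  classical
  induction C using Finset.strongInduction with
  | _ C ih =>
    by_cases hmin : ∀ c ∈ C, ∃ e ∈ E, e ∩ C ⊆ {c}
    · exact ⟨C, Finset.Subset.refl C, h, hmin⟩
    · push_neg at hmin
      obtain ⟨c, hc, hno⟩ := hmin
      have hcov' : IsCover E (C.erase c) := by
        intro e he
        obtain ⟨u, hu, hunot⟩ := Finset.not_subset.mp (hno e he)
        rw [Finset.mem_inter] at hu
        exact ⟨u, Finset.mem_inter.mpr ⟨hu.1,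
          Finset.mem_erase.mpr ⟨by simpa using hunot, hu.2⟩⟩⟩
      obtain ⟨C', hsub, h1, h2⟩ := ih (C.erase c) (Finset.erase_ssubset hc) hcov'
      exact ⟨C', hsub.trans (Finset.erase_subset _ _), h1, h2⟩

noncomputable def coverPrime (k : Type*) [Field k] (C : Finset V) :
    Ideal (MvPolynomial V k) :=
  Ideal.span (X '' (C : Set V))

lemma mem_coverPrime_iff {C : Finset V} {f : MvPolynomial V k} :
    f ∈ coverPrime k C ↔ ∀ b ∈ f.support, ∃ c ∈ C, b c ≠ 0 := by
  rw [coverPrime, mem_ideal_span_X_image]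
  refine forall₂_congr fun b hb => ?_
  constructor
  · rintro ⟨c, hc, h⟩; exact ⟨c, hc, h⟩
  · rintro ⟨c, hc, h⟩; exact ⟨c, hc, h⟩

lemma coverPrime_isPrime (C : Finset V) : (coverPrime k C).IsPrime := by
  classical
  set φ : MvPolynomial V k →ₐ[k] MvPolynomial V k :=
    aeval (fun v => if v ∈ C then 0 else X v) with hφ
  have key : ∀ f : MvPolynomial V k, f - φ f ∈ coverPrime k C := by
    intro f
    induction f using MvPolynomial.induction_on with
    | C a =>
        have : φ (MvPolynomial.C a) = MvPolynomial.C a := by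
          simp [hφ, algebraMap_eq]
        rw [this, sub_self]
        exact Ideal.zero_mem _
    | add p q hp hq =>
        have : p + q - φ (p + q) = (p - φ p) + (q - φ q) := by
          rw [map_add]; ring
        rw [this]
        exact Ideal.add_mem _ hp hq
    | mul_X p v hp =>
        rw [map_mul]
        have hX : φ (X v) = if v ∈ C then 0 else X v := by simp [hφ]
        by_cases hv : v ∈ C
        · rw [hX, if_pos hv, mul_zero, sub_zero]
          exact Ideal.mul_mem_left _ p (Ideal.subset_span ⟨v, hv, rfl⟩)
        · rw [hX, if_neg hv]
          have : p * X v - φ p * X v = (p - φ p) * X v := by ring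
          rw [this]
          exact Ideal.mul_mem_right _ _ hp
  have hker : coverPrime k C = RingHom.ker (φ.toRingHom) := by
    apply le_antisymm
    · rw [coverPrime, Ideal.span_le]
      rintro _ ⟨c, hc, rfl⟩
      have : φ (X c) = 0 := by simp [hφ, Finset.mem_coe.mp hc]
      simpa [RingHom.mem_ker] using this
    · intro f hf
      have h0 : φ f = 0 := hf
      have := key f
      rwa [h0, sub_zero] at this
  rw [hker]
  exact RingHom.ker_isPrime _

lemma ind_compl_apply (C : Finset V) (u : V) :
    ind ((Finset.univ : Finset V) \ C) u = if u ∈ C then 0 else 1 := by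
  rw [ind_apply]
  by_cases h : u ∈ C <;> simp [h]

lemma coverPrime_isAssociated (E : Finset (Finset V)) (C : Finset V)
    (hC : IsCover E C) (hmin : ∀ c ∈ C, ∃ e ∈ E, e ∩ C ⊆ {c}) :
    coverPrime k C ∈ associatedPrimes (MvPolynomial V k)
      (MvPolynomial V k ⧸ edgeIdeal k E) := by
  classical
  set m : MvPolynomial V k := monomial (ind ((Finset.univ : Finset V) \ C)) 1 with hm
  refine ⟨coverPrime_isPrime C, Ideal.Quotient.mk (edgeIdeal k E) m, ?_⟩
  have hann : ∀ r : MvPolynomial V k,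
      (r ∈ (Submodule.span (MvPolynomial V k)
        {Ideal.Quotient.mk (edgeIdeal k E) m}).annihilator ↔ r * m ∈ edgeIdeal k E) := by
    intro r
    rw [Submodule.mem_annihilator_span_singleton]
    have hsmul : r • (Ideal.Quotient.mk (edgeIdeal k E) m) =
        Ideal.Quotient.mk (edgeIdeal k E) (r * m) := rfl
    rw [hsmul, Ideal.Quotient.eq_zero_iff_mem]
  suffices hsuff : coverPrime k C = (Submodule.span (MvPolynomial V k)
      {Ideal.Quotient.mk (edgeIdeal k E) m}).annihilator by
    rw [Submodule.bot_colon', ← hsuff, (coverPrime_isPrime C).radical]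
  apply le_antisymm
  · -- coverPrime ≤ annihilator
    rw [coverPrime, Ideal.span_le]
    rintro _ ⟨c, hc', rfl⟩
    have hc : c ∈ C := Finset.mem_coe.mp hc'
    rw [SetLike.mem_coe, hann]
    obtain ⟨e, he, hec⟩ := hmin c hc
    rw [hm, X, monomial_mul, one_mul]
    rw [mem_edgeIdeal_iff]
    intro b hb
    rw [support_monomial, if_neg one_ne_zero, Finset.mem_singleton] at hb
    subst hb
    refine ⟨e, he, ?_⟩
    rw [Finsupp.le_def]
    intro u
    rw [ind_apply, Finsupp.add_apply, ind_compl_apply, Finsupp.single_apply]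
    by_cases hu : u ∈ e
    · rw [if_pos hu]
      by_cases huc : u ∈ C
      · have : u ∈ ({c} : Finset V) := hec (Finset.mem_inter.mpr ⟨hu, huc⟩)
        rw [Finset.mem_singleton] at this
        subst this
        simp [huc]
      · simp [huc]
    · simp [hu]
  · -- annihilator ≤ coverPrime
    intro r hr
    rw [hann] at hr
    by_contra hrc
    rw [mem_coverPrime_iff] at hrc
    push_neg at hrc
    obtain ⟨b, hb, hbc⟩ := hrc
    have hsup : b + ind ((Finset.univ : Finset V) \ C) ∈ (r * m).support := by
      rw [mem_support_iff, hm, coeff_mul_monomial, mul_one]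
      exact mem_support_iff.mp hb
    obtain ⟨e, he, hle⟩ := mem_edgeIdeal_iff.mp hr _ hsup
    obtain ⟨c, hcm⟩ := hC e he
    rw [Finset.mem_inter] at hcm
    have h1 := Finsupp.le_def.mp hle c
    rw [ind_apply, if_pos hcm.1, Finsupp.add_apply, ind_compl_apply,
      if_pos hcm.2, hbc c hcm.2] at h1
    omega

lemma two_le_sum (E : Finset (Finset V)) (a : V →₀ ℕ) (C : Finset V)
    (hC : IsCover E C) (hmin : ∀ c ∈ C, ∃ e ∈ E, e ∩ C ⊆ {c})
    (hmem : (monomial a (1 : k)) ∈ symbolicPower (edgeIdeal k E) 2) :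
    2 ≤ ∑ c ∈ C, a c := by
  classical
  set I := edgeIdeal k E with hI
  set p := coverPrime k C with hp
  have hpp : p.IsPrime := coverPrime_isPrime C
  set L := Localization p.primeCompl with hL
  have hJ : (monomial a (1 : k)) ∈ Ideal.comap (algebraMap (MvPolynomial V k) L)
      (Ideal.map (algebraMap (MvPolynomial V k) L) (I ^ 2)) := by
    refine Submodule.mem_sInf.mp hmem _ ?_
    exact ⟨p, hpp, coverPrime_isAssociated E C hC hmin, rfl⟩
  rw [Ideal.mem_comap, IsLocalization.mem_map_algebraMap_iff p.primeCompl L] at hJ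
  obtain ⟨⟨i, s⟩, hx⟩ := hJ
  have hinj : Function.Injective (algebraMap (MvPolynomial V k) L) := by
    apply IsLocalization.injective (M := p.primeCompl) L
    intro x hx0
    have hxp : x ∉ p := hx0
    have : x ≠ 0 := fun h => hxp (h ▸ p.zero_mem)
    exact mem_nonZeroDivisors_of_ne_zero this
  have heq : (monomial a (1 : k)) * (s : MvPolynomial V k) = i := by
    apply hinj
    rw [map_mul]
    exact hx
  have hI2 : (s : MvPolynomial V k) * monomial a (1 : k) ∈ I ^ 2 := by
    rw [mul_comm, heq]; exact i.2
  have hs : (s : MvPolynomial V k) ∉ p := s.2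
  obtain ⟨b, hb, hbc⟩ : ∃ b ∈ (s : MvPolynomial V k).support, ∀ c ∈ C, b c = 0 := by
    by_contra h
    push_neg at h
    exact hs (mem_coverPrime_iff.mpr fun b hb => h b hb)
  have hsup : b + a ∈ ((s : MvPolynomial V k) * monomial a (1 : k)).support := by
    rw [mem_support_iff, coeff_mul_monomial, mul_one]
    exact mem_support_iff.mp hb
  obtain ⟨e, he, f, hf, hle⟩ := mem_sq_iff.mp hI2 _ hsup
  obtain ⟨c1, hc1⟩ := hC e he
  obtain ⟨c2, hc2⟩ := hC f hf
  rw [Finset.mem_inter] at hc1 hc2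
  have step1 : 2 ≤ ∑ c ∈ C, (ind e c + ind f c) := by
    by_cases hcc : c1 = c2
    · subst hcc
      have hterm : ind e c1 + ind f c1 = 2 := by
        rw [ind_apply, if_pos hc1.1, ind_apply, if_pos hc2.1]
      calc 2 = ind e c1 + ind f c1 := hterm.symm
        _ ≤ ∑ c ∈ C, (ind e c + ind f c) :=
          Finset.single_le_sum (f := fun c => ind e c + ind f c) (fun c _ => Nat.zero_le _) hc1.2
    · have hpair : ({c1, c2} : Finset V) ⊆ C := by
        intro u hu
        rw [Finset.mem_insert, Finset.mem_singleton] at hu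
        rcases hu with h | h
        · exact h ▸ hc1.2
        · exact h ▸ hc2.2
      have hsum : ∑ c ∈ ({c1, c2} : Finset V), (ind e c + ind f c)
          ≤ ∑ c ∈ C, (ind e c + ind f c) :=
        Finset.sum_le_sum_of_subset hpair
      rw [Finset.sum_pair hcc] at hsum
      have h1 : 1 ≤ ind e c1 + ind f c1 := by
        rw [ind_apply e c1, if_pos hc1.1]; omega
      have h2 : 1 ≤ ind e c2 + ind f c2 := by
        rw [ind_apply f c2, if_pos hc2.1]; omega
      omega
  have step2 : ∑ c ∈ C, (ind e c + ind f c) ≤ ∑ c ∈ C, a c := by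
    calc ∑ c ∈ C, (ind e c + ind f c) ≤ ∑ c ∈ C, (b + a) c :=
          Finset.sum_le_sum fun c _ => by
            have := Finsupp.le_def.mp hle c
            simpa [Finsupp.add_apply] using this
      _ = ∑ c ∈ C, a c := by
          refine Finset.sum_congr rfl fun c hc => ?_
          rw [Finsupp.add_apply, hbc c hc, zero_add]
  omega

end Stmt16Aux

set_option linter.unusedVariables false

open Stmt16Aux in
/-- if a monomial lies in the second symbolic but not the second
ordinary power of the edge ideal of a 3-uniform 3-partite hypergraph, then there
are three distinct pairwise intersecting hyperedges, each dividing the monomial,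
having at most one common vertex. -/
theorem stmt16 {k V : Type*} [Field k] [Fintype V] [DecidableEq V]
    (E : Finset (Finset V))
    (huniform : ∀ e ∈ E, e.card = 3)
    (Xp : Fin 3 → Finset V)
    (hdisj : Pairwise fun i j => Disjoint (Xp i) (Xp j))
    (hcover : ∀ v : V, ∃ i, v ∈ Xp i)
    (hpartite : ∀ e ∈ E, ∀ i, (e ∩ Xp i).card = 1)
    (a : V →₀ ℕ)
    (hmem : (monomial a (1 : k)) ∈ symbolicPower (edgeIdeal k E) 2)
    (hnot : (monomial a (1 : k)) ∉ (edgeIdeal k E) ^ 2) :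
    ∃ e₁ e₂ e₃ : Finset V, e₁ ∈ E ∧ e₂ ∈ E ∧ e₃ ∈ E ∧
      e₁ ≠ e₂ ∧ e₂ ≠ e₃ ∧ e₁ ≠ e₃ ∧
      (∏ x ∈ e₁, (X x : MvPolynomial V k)) ∣ monomial a 1 ∧
      (∏ x ∈ e₂, (X x : MvPolynomial V k)) ∣ monomial a 1 ∧
      (∏ x ∈ e₃, (X x : MvPolynomial V k)) ∣ monomial a 1 ∧
      (e₁ ∩ e₂).Nonempty ∧ (e₂ ∩ e₃).Nonempty ∧ (e₁ ∩ e₃).Nonempty ∧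
      (e₁ ∩ e₂ ∩ e₃).card ≤ 1 := by
  classical
  by_contra hgoal
  -- β : no product of two edge monomials divides X^a
  have hbeta : ¬ ∃ e ∈ E, ∃ f ∈ E, ind e + ind f ≤ a := by
    rintro ⟨e, he, f, hf, hle⟩
    apply hnot
    rw [mem_sq_iff]
    intro b hb
    rw [support_monomial, if_neg one_ne_zero, Finset.mem_singleton] at hb
    subst hb
    exact ⟨e, he, f, hf, hle⟩
  -- every vertex cover has a-weight at least 2
  have hLall : ∀ C : Finset V, IsCover E C → 2 ≤ ∑ c ∈ C, a c := by
    intro C hC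
    obtain ⟨C', hsub, hC', hmin⟩ := exists_min_cover E C hC
    exact le_trans (two_le_sum E a C' hC' hmin hmem)
      (Finset.sum_le_sum_of_subset hsub)
  -- α : for each u in the support, some edge divides X^a / x_u
  have halpha : ∀ u : V, a u ≠ 0 → ∃ g ∈ E, ind g + Finsupp.single u 1 ≤ a := by
    intro u hu
    by_contra h
    push_neg at h
    set C : Finset V := Finset.univ.filter (fun v => a v ≤ Finsupp.single u 1 v)
      with hCdef
    have hC : IsCover E C := by
      intro e he
      by_contra hempty
      rw [Finset.not_nonempty_iff_eq_empty] at hempty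
      apply h e he
      rw [Finsupp.le_def]; intro v
      rw [Finsupp.add_apply, ind_apply, Finsupp.single_apply]
      by_cases hv : v ∈ e
      · have hvC : v ∉ C := by
          intro hvc
          exact Finset.notMem_empty v (hempty ▸ Finset.mem_inter.mpr ⟨hv, hvc⟩)
        have hva : ¬ a v ≤ Finsupp.single u 1 v := by
          intro hle
          exact hvC (Finset.mem_filter.mpr ⟨Finset.mem_univ v, hle⟩)
        rw [Finsupp.single_apply] at hva
        rw [if_pos hv]
        by_cases h2 : u = v
        · rw [if_pos h2]; rw [if_pos h2] at hva; omega
        · rw [if_neg h2]; rw [if_neg h2] at hva; omega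
      · rw [if_neg hv]
        by_cases h2 : u = v
        · subst h2; rw [if_pos rfl]; omega
        · rw [if_neg h2]; omega
    have h2 := hLall C hC
    have h3 : ∑ c ∈ C, a c ≤ 1 := by
      calc ∑ c ∈ C, a c ≤ ∑ c ∈ C, Finsupp.single u 1 c :=
            Finset.sum_le_sum (fun c hc => (Finset.mem_filter.mp hc).2)
        _ ≤ ∑ c ∈ (Finset.univ : Finset V), Finsupp.single u 1 c :=
            Finset.sum_le_sum_of_subset (Finset.filter_subset _ _)
        _ = 1 := by simp [Finsupp.single_apply]
    omega
  -- some edge divides X^a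
  obtain ⟨e₀, he₀, hde₀⟩ : ∃ e ∈ E, ind e ≤ a := by
    by_contra h
    push_neg at h
    set C : Finset V := Finset.univ.filter (fun v => a v = 0) with hCdef
    have hC : IsCover E C := by
      intro e he
      by_contra hempty
      rw [Finset.not_nonempty_iff_eq_empty] at hempty
      apply h e he
      rw [Finsupp.le_def]; intro v
      rw [ind_apply]
      by_cases hv : v ∈ e
      · have hvC : v ∉ C := by
          intro hvc
          exact Finset.notMem_empty v (hempty ▸ Finset.mem_inter.mpr ⟨hv, hvc⟩)
        have : ¬ a v = 0 := by
          intro h0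
          exact hvC (Finset.mem_filter.mpr ⟨Finset.mem_univ v, h0⟩)
        rw [if_pos hv]; omega
      · rw [if_neg hv]; omega
    have h2 := hLall C hC
    have h3 : ∑ c ∈ C, a c = 0 := by
      apply Finset.sum_eq_zero
      intro c hc
      exact (Finset.mem_filter.mp hc).2
    omega
  have hdvd : ∀ e : Finset V, ind e ≤ a →
      (∏ x ∈ e, (X x : MvPolynomial V k)) ∣ monomial a 1 := by
    intro e h
    rw [prod_X_eq]
    exact monomial_dvd_monomial.mpr ⟨Or.inr h, dvd_refl 1⟩
  have hint : ∀ e ∈ E, ind e ≤ a → ∀ f ∈ E, ind f ≤ a → (e ∩ f).Nonempty := by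
    intro e he hea f hf hfa
    by_contra hempty
    rw [Finset.not_nonempty_iff_eq_empty] at hempty
    by_cases hef : e = f
    · subst hef
      rw [Finset.inter_self] at hempty
      have := huniform e he
      rw [hempty] at this
      simp at this
    · apply hbeta
      refine ⟨e, he, f, hf, ?_⟩
      rw [Finsupp.le_def]; intro v
      rw [Finsupp.add_apply, ind_apply, ind_apply]
      have hv : ¬(v ∈ e ∧ v ∈ f) := fun hh =>
        Finset.notMem_empty v (hempty ▸ Finset.mem_inter.mpr hh)
      have h1 := Finsupp.le_def.mp hea v
      have h2 := Finsupp.le_def.mp hfa v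
      rw [ind_apply] at h1
      rw [ind_apply] at h2
      by_cases hv1 : v ∈ e
      · by_cases hv2 : v ∈ f
        · exact absurd ⟨hv1, hv2⟩ hv
        · rw [if_pos hv1, if_neg hv2]; rw [if_pos hv1] at h1; omega
      · by_cases hv2 : v ∈ f
        · rw [if_neg hv1, if_pos hv2]; rw [if_pos hv2] at h2; omega
        · rw [if_neg hv1, if_neg hv2]; omega
  -- main case split
  by_cases hex : ∃ f ∈ E, ind f ≤ a ∧ f ≠ e₀
  · obtain ⟨f, hf, hfa, hfe⟩ := hex
    have hclaim : ∀ u ∈ e₀ ∩ f, 2 ≤ a u := by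
      intro u hu
      rw [Finset.mem_inter] at hu
      have hau : a u ≠ 0 := by
        have := Finsupp.le_def.mp hde₀ u
        rw [ind_apply, if_pos hu.1] at this
        omega
      obtain ⟨g, hg, hga⟩ := halpha u hau
      have hgle : ind g ≤ a := le_trans (self_le_add_right _ _) hga
      by_cases hug : u ∈ g
      · have := Finsupp.le_def.mp hga u
        rw [Finsupp.add_apply, ind_apply, if_pos hug, Finsupp.single_apply,
          if_pos rfl] at this
        omega
      · exfalso
        have hge : g ≠ e₀ := fun h => hug (h ▸ hu.1)
        have hgf : g ≠ f := fun h => hug (h ▸ hu.2)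
        have hc2 : (e₀ ∩ f).card ≤ 2 := by
          by_contra hc
          push_neg at hc
          have hsub : e₀ ∩ f ⊆ e₀ := Finset.inter_subset_left
          have h3 : e₀ ∩ f = e₀ := by
            apply Finset.eq_of_subset_of_card_le hsub
            rw [huniform e₀ he₀]; omega
          have hsubf : e₀ ⊆ f := by
            rw [← h3]; exact Finset.inter_subset_right
          have : e₀ = f := Finset.eq_of_subset_of_card_le hsubf
            (by rw [huniform e₀ he₀, huniform f hf])
          exact hfe this.symm
        have huef : u ∈ e₀ ∩ f := Finset.mem_inter.mpr hu
        have hsub3 : e₀ ∩ f ∩ g ⊆ (e₀ ∩ f).erase u := by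
          intro v hv
          rw [Finset.mem_inter] at hv
          refine Finset.mem_erase.mpr ⟨?_, hv.1⟩
          intro hvu
          exact hug (hvu ▸ hv.2)
        have hcard : (e₀ ∩ f ∩ g).card ≤ 1 := by
          have := Finset.card_le_card hsub3
          rw [Finset.card_erase_of_mem huef] at this
          omega
        exact hgoal ⟨e₀, f, g, he₀, hf, hg, hfe.symm, hgf.symm, hge.symm,
          hdvd e₀ hde₀, hdvd f hfa, hdvd g hgle,
          hint e₀ he₀ hde₀ f hf hfa, hint f hf hfa g hg hgle,
          hint e₀ he₀ hde₀ g hg hgle, hcard⟩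
    apply hbeta
    refine ⟨e₀, he₀, f, hf, ?_⟩
    rw [Finsupp.le_def]; intro v
    rw [Finsupp.add_apply, ind_apply, ind_apply]
    have h1 := Finsupp.le_def.mp hde₀ v
    have h2 := Finsupp.le_def.mp hfa v
    rw [ind_apply] at h1
    rw [ind_apply] at h2
    by_cases hv1 : v ∈ e₀
    · by_cases hv2 : v ∈ f
      · have := hclaim v (Finset.mem_inter.mpr ⟨hv1, hv2⟩)
        rw [if_pos hv1, if_pos hv2]; omega
      · rw [if_pos hv1, if_neg hv2]; rw [if_pos hv1] at h1; omega
    · by_cases hv2 : v ∈ f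
      · rw [if_neg hv1, if_pos hv2]; rw [if_pos hv2] at h2; omega
      · rw [if_neg hv1, if_neg hv2]; omega
  · push_neg at hex
    have hdouble : ∀ u ∈ e₀, 2 ≤ a u := by
      intro u hu
      have hau : a u ≠ 0 := by
        have := Finsupp.le_def.mp hde₀ u
        rw [ind_apply, if_pos hu] at this
        omega
      obtain ⟨g, hg, hga⟩ := halpha u hau
      have hgle : ind g ≤ a := le_trans (self_le_add_right _ _) hga
      have hge : g = e₀ := hex g hg hgle
      subst hge
      have := Finsupp.le_def.mp hga u
      rw [Finsupp.add_apply, ind_apply, if_pos hu, Finsupp.single_apply,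
        if_pos rfl] at this
      omega
    apply hbeta
    refine ⟨e₀, he₀, e₀, he₀, ?_⟩
    rw [Finsupp.le_def]; intro v
    rw [Finsupp.add_apply, ind_apply]
    by_cases hv : v ∈ e₀
    · rw [if_pos hv]; have := hdouble v hv; omega
    · rw [if_neg hv]; omega
end

section
/- Let H be a hypergraph with edge ideal I ⊆ k[x_1,...,x_n]. A monomial X^a lies in the symbolic power I^(m) if and only if for every monomial X^b of degree at most m−1 dividing X^a, the monomial X^a / X^b lies in I. -/
set_option linter.unusedSectionVars false

open MvPolynomial

namespace Stmt18

variable {k V : Type*} [Field k] [Fintype V] [DecidableEq V]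

noncomputable def ind (s : Finset V) : V →₀ ℕ := ∑ x ∈ s, Finsupp.single x 1

lemma ind_apply (s : Finset V) (x : V) : ind s x = if x ∈ s then 1 else 0 := by
  classical
  simp [ind, Finsupp.finset_sum_apply, Finsupp.single_apply]

lemma ind_le_iff (s : Finset V) (c : V →₀ ℕ) : ind s ≤ c ↔ ∀ x ∈ s, 1 ≤ c x := by
  rw [Finsupp.le_def]
  constructor
  · intro h x hx
    have := h x
    rwa [ind_apply, if_pos hx] at this
  · intro h x
    rw [ind_apply]
    split_ifs with hx
    · exact h x hx
    · exact Nat.zero_le _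

lemma prod_X (s : Finset V) :
    (∏ x ∈ s, (X x : MvPolynomial V k)) = monomial (ind s) 1 := by
  induction s using Finset.cons_induction with
  | empty => simp [ind]
  | cons a s ha ih =>
      have : ind (Finset.cons a s ha) = Finsupp.single a 1 + ind s := by
        rw [ind, ind, Finset.sum_cons]
      rw [Finset.prod_cons, ih, this, X, monomial_mul, one_mul]

lemma edgeIdeal_eq (E : Finset (Finset V)) :
    edgeIdeal k E = Ideal.span ((fun d => monomial d (1:k)) '' (ind '' ↑E)) := by
  rw [edgeIdeal, ← Set.image_comp]
  congr 1
  exact Set.image_congr (fun e _ => prod_X e)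

lemma mem_edgeIdeal_iff (E : Finset (Finset V)) (f : MvPolynomial V k) :
    f ∈ edgeIdeal k E ↔ ∀ c ∈ f.support, ∃ e ∈ E, ind e ≤ c := by
  rw [edgeIdeal_eq, mem_ideal_span_monomial_image]
  constructor
  · intro h c hc
    obtain ⟨si, hsi, hle⟩ := h c hc
    obtain ⟨e, he, rfl⟩ := hsi
    exact ⟨e, he, hle⟩
  · intro h c hc
    obtain ⟨e, he, hle⟩ := h c hc
    exact ⟨ind e, ⟨e, he, rfl⟩, hle⟩

lemma monomial_mem_edgeIdeal_iff (E : Finset (Finset V)) (c : V →₀ ℕ) :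
    (monomial c (1:k)) ∈ edgeIdeal k E ↔ ∃ e ∈ E, ind e ≤ c := by
  rw [mem_edgeIdeal_iff]
  have hs : (monomial c (1:k)).support = {c} := by
    classical
    rw [support_monomial, if_neg one_ne_zero]
  rw [hs]
  simp

noncomputable def PW (k : Type*) [Field k] (W : Finset V) : Ideal (MvPolynomial V k) :=
  Ideal.span ((fun d => monomial d (1:k)) '' ((fun v => Finsupp.single v (1:ℕ)) '' ↑W))

lemma mem_PW_iff (W : Finset V) (f : MvPolynomial V k) :
    f ∈ PW k W ↔ ∀ c ∈ f.support, ∃ v ∈ W, 1 ≤ c v := by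
  rw [PW, mem_ideal_span_monomial_image]
  constructor
  · intro h c hc
    obtain ⟨si, hsi, hle⟩ := h c hc
    obtain ⟨v, hv, rfl⟩ := hsi
    exact ⟨v, hv, Finsupp.single_le_iff.mp hle⟩
  · intro h c hc
    obtain ⟨v, hv, hle⟩ := h c hc
    exact ⟨Finsupp.single v 1, ⟨v, hv, rfl⟩, Finsupp.single_le_iff.mpr hle⟩

lemma monomial_mem_PW_iff (W : Finset V) (c : V →₀ ℕ) :
    (monomial c (1:k)) ∈ PW k W ↔ ∃ v ∈ W, 1 ≤ c v := by
  rw [mem_PW_iff]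
  have hs : (monomial c (1:k)).support = {c} := by
    classical
    rw [support_monomial, if_neg one_ne_zero]
  rw [hs]
  simp

noncomputable def piW (W : Finset V) : MvPolynomial V k →ₐ[k] MvPolynomial V k :=
  aeval (fun v => if v ∈ W then 0 else X v)

lemma piW_monomial (W : Finset V) (d : V →₀ ℕ) (r : k) :
    piW (k := k) W (monomial d r) =
      if ∀ v ∈ W, d v = 0 then monomial d r else 0 := by
  rw [piW, aeval_monomial]
  split_ifs with h
  · have h1 : (d.prod fun i e => (if i ∈ W then (0 : MvPolynomial V k) else X i) ^ e)
        = d.prod fun i e => (X i : MvPolynomial V k) ^ e := by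
      apply Finset.prod_congr rfl
      intro x hx
      have hxW : x ∉ W := fun hxW =>
        absurd (h x hxW) (Finsupp.mem_support_iff.mp hx)
      show (if x ∈ W then (0 : MvPolynomial V k) else X x) ^ d x = (X x) ^ d x
      rw [if_neg hxW]
    rw [h1, monomial_eq, algebraMap_eq]
  · push_neg at h
    obtain ⟨v, hvW, hv⟩ := h
    have : (d.prod fun i e => (if i ∈ W then (0 : MvPolynomial V k) else X i) ^ e) = 0 := by
      apply Finset.prod_eq_zero (Finsupp.mem_support_iff.mpr hv)
      show (if v ∈ W then (0 : MvPolynomial V k) else X v) ^ d v = 0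
      rw [if_pos hvW]
      exact zero_pow hv
    rw [this, mul_zero]

lemma coeff_piW (W : Finset V) (f : MvPolynomial V k) (c : V →₀ ℕ)
    (hc : ∀ v ∈ W, c v = 0) : coeff c (piW (k := k) W f) = coeff c f := by
  have hrepr : piW (k := k) W f = ∑ d ∈ f.support, piW (k := k) W (monomial d (coeff d f)) := by
    rw [← map_sum, support_sum_monomial_coeff]
  rw [hrepr, coeff_sum]
  have : ∀ d ∈ f.support,
      coeff c (piW (k := k) W (monomial d (coeff d f)))
        = if d = c then coeff d f else 0 := by
    intro d _
    rw [piW_monomial]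
    by_cases h1 : ∀ v ∈ W, d v = 0
    · rw [if_pos h1, coeff_monomial]
    · rw [if_neg h1, coeff_zero]
      by_cases h2 : d = c
      · exact absurd (h2 ▸ hc) h1
      · rw [if_neg h2]
  rw [Finset.sum_congr rfl this, Finset.sum_ite_eq' f.support c (fun d => coeff d f)]
  split_ifs with h
  · rfl
  · rw [notMem_support_iff] at h
    rw [h]

lemma piW_eq_zero_iff (W : Finset V) (f : MvPolynomial V k) :
    piW (k := k) W f = 0 ↔ f ∈ PW k W := by
  constructor
  · intro h
    rw [mem_PW_iff]
    intro c hc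
    by_contra hno
    push_neg at hno
    have hc0 : ∀ v ∈ W, c v = 0 := by
      intro v hv
      have := hno v hv
      omega
    have := coeff_piW W f c hc0
    rw [h, coeff_zero] at this
    exact (mem_support_iff.mp hc) this.symm
  · intro h
    have hker : PW k W ≤ RingHom.ker (piW (k := k) W).toRingHom := by
      rw [PW, Ideal.span_le]
      rintro x ⟨si, ⟨v, hv, rfl⟩, rfl⟩
      rw [SetLike.mem_coe, RingHom.mem_ker]
      show piW (k := k) W (monomial (Finsupp.single v 1) 1) = 0
      rw [piW_monomial, if_neg]
      intro hall
      have := hall v hv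
      rw [Finsupp.single_apply, if_pos rfl] at this
      exact one_ne_zero this
    exact hker h

lemma PW_prime (W : Finset V) : (PW k W).IsPrime := by
  rw [Ideal.isPrime_iff]
  constructor
  · intro htop
    have h1 : (1 : MvPolynomial V k) ∈ PW k W := htop ▸ Submodule.mem_top
    rw [mem_PW_iff] at h1
    have h0 : (0 : V →₀ ℕ) ∈ (1 : MvPolynomial V k).support := by
      rw [mem_support_iff]
      simp
    obtain ⟨v, _, hv⟩ := h1 0 h0
    simp at hv
  · intro f g hfg
    rw [← piW_eq_zero_iff, map_mul] at hfg
    rcases mul_eq_zero.mp hfg with h | h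
    · exact Or.inl ((piW_eq_zero_iff W f).mp h)
    · exact Or.inr ((piW_eq_zero_iff W g).mp h)

noncomputable def degW (W : Finset V) (c : V →₀ ℕ) : ℕ := ∑ v ∈ W, c v

lemma degW_mono (W : Finset V) {c d : V →₀ ℕ} (h : c ≤ d) : degW W c ≤ degW W d :=
  Finset.sum_le_sum (fun v _ => h v)

lemma degW_add (W : Finset V) (c d : V →₀ ℕ) :
    degW W (c + d) = degW W c + degW W d := by
  rw [degW, degW, degW, ← Finset.sum_add_distrib]
  rfl

noncomputable def Jdeg (W : Finset V) (m : ℕ) : Ideal (MvPolynomial V k) :=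
  Ideal.span ((fun d => monomial d (1:k)) '' {c | m ≤ degW W c})

lemma mem_Jdeg_iff (W : Finset V) (m : ℕ) (f : MvPolynomial V k) :
    f ∈ Jdeg W m ↔ ∀ c ∈ f.support, m ≤ degW W c := by
  rw [Jdeg, mem_ideal_span_monomial_image]
  constructor
  · intro h c hc
    obtain ⟨d, hd, hle⟩ := h c hc
    exact le_trans hd (degW_mono W hle)
  · intro h c hc
    exact ⟨c, h c hc, le_rfl⟩

def Cov (E : Finset (Finset V)) (W : Finset V) : Prop := ∀ e ∈ E, ∃ x ∈ e, x ∈ W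

def MinCov (E : Finset (Finset V)) (W : Finset V) : Prop :=
  Cov E W ∧ ∀ W' ⊆ W, Cov E W' → W' = W

lemma exists_minCov_le {E : Finset (Finset V)} {C : Finset V} (hC : Cov E C) :
    ∃ W, W ⊆ C ∧ MinCov E W := by
  classical
  induction C using Finset.strongInduction with
  | _ C ih =>
    by_cases h : ∃ W' , W' ⊂ C ∧ Cov E W'
    · obtain ⟨W', hW', hcov⟩ := h
      obtain ⟨W, hWle, hmin⟩ := ih W' hW' hcov
      exact ⟨W, hWle.trans hW'.subset, hmin⟩
    · push_neg at h
      refine ⟨C, subset_rfl, hC, ?_⟩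
      intro W' hle hcov
      by_contra hne
      exact absurd hcov (h W' (ssubset_of_subset_of_ne hle hne))

lemma edgeIdeal_le_Jdeg_one {E : Finset (Finset V)} {W : Finset V} (hW : Cov E W) :
    edgeIdeal k E ≤ Jdeg W 1 := by
  intro f hf
  rw [mem_edgeIdeal_iff] at hf
  rw [mem_Jdeg_iff]
  intro c hc
  obtain ⟨e, he, hle⟩ := hf c hc
  obtain ⟨x, hxe, hxW⟩ := hW e he
  calc 1 ≤ c x := (ind_le_iff e c).mp hle x hxe
  _ ≤ degW W c := Finset.single_le_sum (fun v _ => Nat.zero_le _) hxW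

lemma edgeIdeal_pow_le_Jdeg {E : Finset (Finset V)} {W : Finset V} (hW : Cov E W) (m : ℕ) :
    (edgeIdeal k E) ^ m ≤ Jdeg W m := by
  induction m with
  | zero =>
      intro f _
      rw [mem_Jdeg_iff]
      intro c _
      exact Nat.zero_le _
  | succ n ihn =>
      rw [pow_succ]
      rw [Ideal.mul_le]
      intro r hr s hs
      have hr' := ihn hr
      have hs' := edgeIdeal_le_Jdeg_one (k := k) hW hs
      rw [mem_Jdeg_iff] at *
      intro c hc
      classical
      have := support_mul r s hc
      rw [Finset.mem_add] at this
      obtain ⟨c1, hc1, c2, hc2, rfl⟩ := this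
      rw [degW_add]
      exact Nat.add_le_add (hr' c1 hc1) (hs' c2 hc2)

lemma X_mem_PW_iff (W : Finset V) (v : V) : (X v : MvPolynomial V k) ∈ PW k W ↔ v ∈ W := by
  rw [X, monomial_mem_PW_iff]
  constructor
  · rintro ⟨u, hu, h1⟩
    rw [Finsupp.single_apply] at h1
    by_cases h : v = u
    · subst h; exact hu
    · rw [if_neg h] at h1; omega
  · intro hv; exact ⟨v, hv, by simp⟩

lemma smul_mk (E : Finset (Finset V)) (g y : MvPolynomial V k) :
    g • (Ideal.Quotient.mk (edgeIdeal k E) y) = Ideal.Quotient.mk (edgeIdeal k E) (g * y) := rfl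

lemma minCov_isAssociated {E : Finset (Finset V)} {W : Finset V} (hW : MinCov E W) :
    (PW k W) ∈ associatedPrimes (MvPolynomial V k) (MvPolynomial V k ⧸ edgeIdeal k E) := by
  classical
  refine (isAssociatedPrime_iff).mpr ⟨PW_prime W, ⟨Ideal.Quotient.mk _ (monomial (ind Wᶜ) (1:k)), ?_⟩⟩
  have hmem : ∀ g : MvPolynomial V k,
      g ∈ (⊥ : Submodule (MvPolynomial V k) (MvPolynomial V k ⧸ edgeIdeal k E)).colon
        {(Ideal.Quotient.mk (edgeIdeal k E)) ((monomial (ind Wᶜ)) (1:k))}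
      ↔ g * monomial (ind Wᶜ) (1:k) ∈ edgeIdeal k E := by
    intro g
    rw [Submodule.mem_colon_singleton, Submodule.mem_bot, smul_mk, Ideal.Quotient.eq_zero_iff_mem]
  apply le_antisymm
  · -- PW W ≤ annihilator
    rw [PW, Ideal.span_le]
    rintro x ⟨si, ⟨v, hv, rfl⟩, rfl⟩
    rw [SetLike.mem_coe, hmem, monomial_mul, one_mul, monomial_mem_edgeIdeal_iff]
    -- W.erase v is not a cover
    have hnotcov : ¬ Cov E (W.erase v) := by
      intro hcov
      have h0 := hW.2 (W.erase v) (Finset.erase_subset v W) hcov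
      have h2 : v ∈ W.erase v := by rw [h0]; exact hv
      exact (Finset.notMem_erase v W) h2
    rw [Cov] at hnotcov
    push_neg at hnotcov
    obtain ⟨e, he, hee⟩ := hnotcov
    refine ⟨e, he, ?_⟩
    rw [ind_le_iff]
    intro x hxe
    rw [Finsupp.add_apply, ind_apply]
    by_cases hxv : x = v
    · subst hxv
      rw [Finsupp.single_apply, if_pos rfl]
      omega
    · have hxW : x ∉ W := by
        intro hxW
        exact hxv (by
          have := hee x hxe
          by_contra hne
          exact this (Finset.mem_erase.mpr ⟨hxv, hxW⟩))
      rw [if_pos (Finset.mem_compl.mpr hxW)]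
      omega
  · -- annihilator ≤ PW W
    intro g hg
    rw [hmem] at hg
    rw [mem_PW_iff]
    intro d hd
    have hdc : (d + ind Wᶜ) ∈ (g * monomial (ind Wᶜ) (1:k)).support := by
      rw [mem_support_iff, coeff_mul_monomial, mul_one]
      exact mem_support_iff.mp hd
    rw [mem_edgeIdeal_iff] at hg
    obtain ⟨e, he, hle⟩ := hg _ hdc
    obtain ⟨x, hxe, hxW⟩ := hW.1 e he
    refine ⟨x, hxW, ?_⟩
    have h1 : 1 ≤ (d + ind Wᶜ) x := (ind_le_iff e _).mp hle x hxe
    rw [Finsupp.add_apply, ind_apply, if_neg (by simp [hxW])] at h1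
    omega

open Classical in
noncomputable def MCs (E : Finset (Finset V)) : Finset (Finset V) :=
  Finset.univ.filter (fun W => MinCov E W)

lemma mem_MCs {E : Finset (Finset V)} {W : Finset V} : W ∈ MCs E ↔ MinCov E W := by
  simp [MCs]

lemma edgeIdeal_le_PW {E : Finset (Finset V)} {W : Finset V} (hW : Cov E W) :
    edgeIdeal k E ≤ PW k W := by
  intro f hf
  rw [mem_edgeIdeal_iff] at hf
  rw [mem_PW_iff]
  intro c hc
  obtain ⟨e, he, hle⟩ := hf c hc
  obtain ⟨x, hxe, hxW⟩ := hW e he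
  exact ⟨x, hxW, (ind_le_iff e c).mp hle x hxe⟩

lemma edgeIdeal_eq_inf (E : Finset (Finset V)) :
    edgeIdeal k E = (MCs E).inf (fun W => PW k W) := by
  classical
  apply le_antisymm
  · exact le_trans le_rfl (Finset.le_inf (fun W hW => edgeIdeal_le_PW (mem_MCs.mp hW).1))
  · intro f hf
    rw [Submodule.mem_finsetInf] at hf
    rw [mem_edgeIdeal_iff]
    intro c hc
    by_contra hno
    push_neg at hno
    have hcov : Cov E (Finset.univ.filter (fun x => c x = 0)) := by
      intro e he
      have := hno e he
      rw [ind_le_iff] at this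
      push_neg at this
      obtain ⟨x, hxe, hx⟩ := this
      exact ⟨x, hxe, Finset.mem_filter.mpr ⟨Finset.mem_univ x, by omega⟩⟩
    obtain ⟨W, hWsub, hWmin⟩ := exists_minCov_le hcov
    have hfW := hf W (mem_MCs.mpr hWmin)
    rw [mem_PW_iff] at hfW
    obtain ⟨v, hvW, hv⟩ := hfW c hc
    have := Finset.mem_filter.mp (hWsub hvW)
    omega

lemma assoc_eq_PW {E : Finset (Finset V)} {p : Ideal (MvPolynomial V k)}
    (hp : p ∈ associatedPrimes (MvPolynomial V k) (MvPolynomial V k ⧸ edgeIdeal k E)) :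
    ∃ W, MinCov E W ∧ p = PW k W := by
  classical
  obtain ⟨hprime, x, hx⟩ := (isAssociatedPrime_iff).mp hp
  obtain ⟨f, rfl⟩ := Ideal.Quotient.mk_surjective x
  have hmem : ∀ g, g ∈ p ↔ g * f ∈ edgeIdeal k E := by
    intro g
    rw [hx, Submodule.mem_colon_singleton, Submodule.mem_bot, smul_mk, Ideal.Quotient.eq_zero_iff_mem]
  have hf : f ∉ edgeIdeal k E := by
    intro h
    apply hprime.ne_top
    rw [Ideal.eq_top_iff_one, hmem, one_mul]
    exact h
  have hIp : edgeIdeal k E ≤ p := by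
    intro g hg
    rw [hmem]
    exact Ideal.mul_mem_right f _ hg
  have hinf : (MCs E).inf (fun W => PW k W) ≤ p := by
    rw [← edgeIdeal_eq_inf]; exact hIp
  obtain ⟨W0, hW0mem, hW0le⟩ := (hprime.inf_le').mp hinf
  have hW1 : ∃ W1 ∈ MCs E, f ∉ PW k W1 := by
    by_contra h
    push_neg at h
    apply hf
    rw [edgeIdeal_eq_inf, Submodule.mem_finsetInf]
    exact h
  obtain ⟨W1, hW1mem, hfW1⟩ := hW1
  have hple : p ≤ PW k W1 := by
    intro g hg
    have h2 : g * f ∈ PW k W1 :=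
      edgeIdeal_le_PW (mem_MCs.mp hW1mem).1 ((hmem g).mp hg)
    rcases (PW_prime W1).mem_or_mem h2 with h | h
    · exact h
    · exact absurd h hfW1
  have hsub : W0 ⊆ W1 := by
    intro v hv
    exact (X_mem_PW_iff W1 v).mp (hple (hW0le ((X_mem_PW_iff W0 v).mpr hv)))
  have heq : W0 = W1 := (mem_MCs.mp hW1mem).2 W0 hsub (mem_MCs.mp hW0mem).1
  exact ⟨W1, mem_MCs.mp hW1mem, le_antisymm hple (heq ▸ hW0le)⟩

lemma mem_contraction_iff {R : Type*} [CommRing R] [IsDomain R] {p : Ideal R} (hp : p.IsPrime)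
    (J : Ideal R) (x : R) :
    x ∈ Ideal.comap (algebraMap R (Localization (@Ideal.primeCompl R _ p hp)))
        (Ideal.map (algebraMap R (Localization (@Ideal.primeCompl R _ p hp))) J) ↔
      ∃ s, s ∉ p ∧ s * x ∈ J := by
  haveI := hp
  rw [Ideal.mem_comap, IsLocalization.mem_map_algebraMap_iff p.primeCompl]
  constructor
  · rintro ⟨⟨⟨i, hi⟩, ⟨t, ht⟩⟩, h⟩
    rw [← map_mul] at h
    have heq : x * t = i :=
      IsLocalization.injective (Localization p.primeCompl)
        p.primeCompl_le_nonZeroDivisors h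
    refine ⟨t, ht, ?_⟩
    rw [mul_comm, heq]
    exact hi
  · rintro ⟨t, ht, hJ⟩
    exact ⟨⟨⟨t * x, hJ⟩, ⟨t, ht⟩⟩, by rw [← map_mul, mul_comm]⟩

lemma prod_monomial (s : Finset V) (g : V → (V →₀ ℕ)) :
    (∏ v ∈ s, (monomial (g v) (1:k))) = monomial (∑ v ∈ s, g v) 1 := by
  induction s using Finset.cons_induction with
  | empty => simp
  | cons a s ha ih =>
      rw [Finset.prod_cons, ih, Finset.sum_cons, monomial_mul, one_mul]

lemma prod_pow_mem {R : Type*} [CommRing R] (I : Ideal R) (s : Finset V) (x : V → R)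
    (n : V → ℕ) (hx : ∀ v ∈ s, x v ∈ I) :
    (∏ v ∈ s, x v ^ n v) ∈ I ^ (∑ v ∈ s, n v) := by
  induction s using Finset.cons_induction with
  | empty => simp [Ideal.one_eq_top]
  | cons a s ha ih =>
      rw [Finset.prod_cons, Finset.sum_cons, pow_add]
      exact Ideal.mul_mem_mul (Ideal.pow_mem_pow (hx a (Finset.mem_cons_self _ _)) _)
        (ih fun v hv => hx v (Finset.mem_cons.mpr (Or.inr hv)))

lemma exists_sub_d (W : Finset V) (m : ℕ) (a : V →₀ ℕ) (hm : m ≤ ∑ v ∈ W, a v) :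
    ∃ d : V →₀ ℕ, (∀ v, v ∉ W → d v = 0) ∧ d ≤ a ∧ ∑ v ∈ W, d v = m := by
  induction m with
  | zero => exact ⟨0, by intro v _; simp, zero_le, by simp⟩
  | succ n ihn =>
      obtain ⟨d, hd0, hda, hdsum⟩ := ihn (le_trans (Nat.le_succ n) hm)
      have hlt : ∃ v ∈ W, d v < a v := by
        by_contra h
        push_neg at h
        have := Finset.sum_le_sum h
        omega
      obtain ⟨v, hvW, hv⟩ := hlt
      refine ⟨d + Finsupp.single v 1, ?_, ?_, ?_⟩
      · intro u hu
        rw [Finsupp.add_apply, hd0 u hu, Finsupp.single_apply,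
          if_neg (by rintro rfl; exact hu hvW)]
        simp
      · intro u
        rw [Finsupp.add_apply, Finsupp.single_apply]
        by_cases h : v = u
        · subst h
          rw [if_pos rfl]
          omega
        · rw [if_neg h]
          simpa using hda u
      · rw [Finset.sum_congr rfl (fun u _ => Finsupp.add_apply d (Finsupp.single v 1) u),
          Finset.sum_add_distrib, hdsum]
        have h2 : ∑ u ∈ W, (Finsupp.single v (1:ℕ)) u = 1 := by
          rw [Finset.sum_congr rfl (fun u _ => Finsupp.single_apply),
            Finset.sum_ite_eq W v (fun _ => 1), if_pos hvW]
        rw [h2]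

lemma minCov_edge {E : Finset (Finset V)} {W : Finset V} (hW : MinCov E W)
    {v : V} (hv : v ∈ W) :
    ∃ e ∈ E, v ∈ e ∧ ∀ x ∈ e, x ∈ W → x = v := by
  have hnotcov : ¬ Cov E (W.erase v) := by
    intro hcov
    have h0 := hW.2 (W.erase v) (Finset.erase_subset v W) hcov
    have h2 : v ∈ W.erase v := by rw [h0]; exact hv
    exact (Finset.notMem_erase v W) h2
  rw [Cov] at hnotcov
  push_neg at hnotcov
  obtain ⟨e, he, hee⟩ := hnotcov
  obtain ⟨x, hxe, hxW⟩ := hW.1 e he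
  have hxv : x = v := by
    by_contra hne
    exact hee x hxe (Finset.mem_erase.mpr ⟨hne, hxW⟩)
  refine ⟨e, he, hxv ▸ hxe, ?_⟩
  intro y hy hyW
  by_contra hne
  exact hee y hy (Finset.mem_erase.mpr ⟨hne, hyW⟩)

lemma finsupp_sum_eq (b : V →₀ ℕ) : (b.sum fun _ e => e) = ∑ v : V, b v :=
  Finsupp.sum_fintype b (fun _ e => e) (fun _ => rfl)

lemma sum_W_le {E : Finset (Finset V)} (W : Finset V) (m : ℕ) (hm : 1 ≤ m) (a : V →₀ ℕ)
    (hW : Cov E W)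
    (hRHS : ∀ b : V →₀ ℕ, b ≤ a → (b.sum fun _ e => e) ≤ m - 1 →
        (monomial (a - b) (1 : k)) ∈ edgeIdeal k E) :
    m ≤ ∑ v ∈ W, a v := by
  classical
  by_contra hlt
  push_neg at hlt
  set b : V →₀ ℕ := ∑ v ∈ W, Finsupp.single v (a v) with hb
  have hbapp : ∀ u, b u = if u ∈ W then a u else 0 := by
    intro u
    rw [hb, Finsupp.finset_sum_apply,
      Finset.sum_congr rfl (fun v _ => Finsupp.single_apply),
      Finset.sum_ite_eq' W u a]
  have hble : b ≤ a := by
    intro u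
    rw [hbapp]
    split_ifs
    · exact le_rfl
    · exact Nat.zero_le _
  have hbsum : (b.sum fun _ e => e) = ∑ v ∈ W, a v := by
    rw [finsupp_sum_eq, Finset.sum_congr rfl (fun u _ => hbapp u),
      Finset.sum_ite_mem Finset.univ W a, Finset.univ_inter]
  have hmem := hRHS b hble (by omega)
  rw [monomial_mem_edgeIdeal_iff] at hmem
  obtain ⟨e, he, hle⟩ := hmem
  obtain ⟨x, hxe, hxW⟩ := hW e he
  have h1 : 1 ≤ (a - b) x := (ind_le_iff e _).mp hle x hxe
  rw [Finsupp.tsub_apply] at h1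
  have := hbapp x
  rw [if_pos hxW] at this
  omega

lemma mem_pow_of_RHS {E : Finset (Finset V)} {W : Finset V} (hW : MinCov E W)
    (m : ℕ) (hm : 1 ≤ m) (a : V →₀ ℕ)
    (hRHS : ∀ b : V →₀ ℕ, b ≤ a → (b.sum fun _ e => e) ≤ m - 1 →
        (monomial (a - b) (1 : k)) ∈ edgeIdeal k E) :
    ∃ s, s ∉ PW k W ∧ s * monomial a (1:k) ∈ (edgeIdeal k E) ^ m := by
  classical
  have hdeg : m ≤ ∑ v ∈ W, a v := sum_W_le W m hm a hW.1 hRHS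
  obtain ⟨d, hd0, hda, hdsum⟩ := exists_sub_d W m a hdeg
  have hch : ∀ v ∈ W, ∃ e ∈ E, v ∈ e ∧ ∀ x ∈ e, x ∈ W → x = v :=
    fun v hv => minCov_edge hW hv
  choose! ev hev1 hev2 hev3 using hch
  set r : V →₀ ℕ := ∑ v ∈ W, d v • ind ((ev v).erase v) with hr
  have hrapp : ∀ u, r u = ∑ v ∈ W, d v * (ind ((ev v).erase v)) u := by
    intro u
    rw [hr, Finsupp.finset_sum_apply]
    exact Finset.sum_congr rfl (fun v _ => by rw [Finsupp.smul_apply, smul_eq_mul])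
  have hrW : ∀ u ∈ W, r u = 0 := by
    intro u hu
    rw [hrapp]
    apply Finset.sum_eq_zero
    intro v hv
    have hnm : u ∉ (ev v).erase v := by
      intro hmem
      obtain ⟨hne, hue⟩ := Finset.mem_erase.mp hmem
      exact hne (hev3 v hv u hue hu)
    rw [ind_apply, if_neg hnm, mul_zero]
  refine ⟨monomial r 1, ?_, ?_⟩
  · rw [monomial_mem_PW_iff]
    rintro ⟨v, hv, h1⟩
    rw [hrW v hv] at h1
    omega
  · have hT : ∀ u, (∑ v ∈ W, d v • ind (ev v)) u = d u + r u := by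
      intro u
      rw [Finsupp.finset_sum_apply, hrapp]
      have hsplit : ∀ v ∈ W, (d v • ind (ev v)) u
          = d v * (ind ((ev v).erase v)) u + (if u = v then d v else 0) := by
        intro v hv
        rw [Finsupp.smul_apply, smul_eq_mul, ind_apply, ind_apply]
        by_cases huv : u = v
        · subst huv
          rw [if_pos (hev2 u hv), if_neg (Finset.notMem_erase u _), if_pos rfl]
          ring
        · rw [if_neg huv]
          by_cases hue : u ∈ ev v
          · rw [if_pos hue, if_pos (Finset.mem_erase.mpr ⟨huv, hue⟩)]
            ring
          · rw [if_neg hue, if_neg (fun hmem => hue (Finset.mem_erase.mp hmem).2)]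
            ring
      rw [Finset.sum_congr rfl hsplit, Finset.sum_add_distrib]
      have h2 : ∑ v ∈ W, (if u = v then d v else 0) = d u := by
        rw [Finset.sum_ite_eq W u d]
        split_ifs with h
        · rfl
        · exact (hd0 u h).symm
      omega
    have hF : (monomial (∑ v ∈ W, d v • ind (ev v)) (1:k)) ∈ (edgeIdeal k E) ^ m := by
      have hprod : (monomial (∑ v ∈ W, d v • ind (ev v)) (1:k))
          = ∏ v ∈ W, ((monomial (ind (ev v)) (1:k)) ^ (d v)) := by
        rw [Finset.prod_congr rfl (fun v _ => by rw [monomial_pow, one_pow]),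
          prod_monomial]
      rw [hprod, ← hdsum]
      apply prod_pow_mem
      intro v hv
      rw [monomial_mem_edgeIdeal_iff]
      exact ⟨ev v, hev1 v hv, le_rfl⟩
    have key : monomial r (1:k) * monomial a 1
        = monomial (∑ v ∈ W, d v • ind (ev v)) (1:k) * monomial (a - d) 1 := by
      have hfe : r + a = (∑ v ∈ W, d v • ind (ev v)) + (a - d) := by
        ext u
        rw [Finsupp.add_apply, Finsupp.add_apply, hT, Finsupp.tsub_apply]
        have := hda u
        omega
      rw [monomial_mul, monomial_mul, one_mul, hfe]
    rw [key]
    exact Ideal.mul_mem_right _ _ hF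

end Stmt18

/-- Sullivant: a monomial Xᵃ lies in the m-th symbolic power of the
edge ideal of a simple hypergraph iff for every monomial Xᵇ of degree at most m-1
dividing Xᵃ, the quotient Xᵃ/Xᵇ lies in the edge ideal. -/
theorem stmt18 {k V : Type*} [Field k] [Fintype V] [DecidableEq V]
    (E : Finset (Finset V))
    (hne : ∀ e ∈ E, e.Nonempty)
    (hantichain : ∀ e₁ ∈ E, ∀ e₂ ∈ E, e₁ ⊆ e₂ → e₁ = e₂)
    (m : ℕ) (hm : 1 ≤ m) (a : V →₀ ℕ) :
    (monomial a (1 : k)) ∈ symbolicPower (edgeIdeal k E) m ↔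
      ∀ b : V →₀ ℕ, b ≤ a → (b.sum fun _ e => e) ≤ m - 1 →
        (monomial (a - b) (1 : k)) ∈ edgeIdeal k E := by
  classical
  open Stmt18 in
  rw [symbolicPower]
  constructor
  · intro hsym b hb hbsum
    by_contra hnot
    have hcov : Cov E (Finset.univ.filter fun x => (a - b) x = 0) := by
      intro e he
      by_cases hle : ind e ≤ a - b
      · exact absurd ((monomial_mem_edgeIdeal_iff E _).mpr ⟨e, he, hle⟩) hnot
      · rw [ind_le_iff] at hle
        push_neg at hle
        obtain ⟨x, hxe, hx⟩ := hle
        exact ⟨x, hxe, Finset.mem_filter.mpr ⟨Finset.mem_univ x, by omega⟩⟩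
    obtain ⟨W, hWsub, hWmin⟩ := exists_minCov_le hcov
    have hassoc := minCov_isAssociated (k := k) hWmin
    have hJ := Submodule.mem_sInf.mp hsym _ ⟨PW k W, PW_prime W, hassoc, rfl⟩
    rw [mem_contraction_iff (PW_prime W)] at hJ
    obtain ⟨s, hs, hsa⟩ := hJ
    have hsa' := edgeIdeal_pow_le_Jdeg hWmin.1 m hsa
    rw [mem_PW_iff] at hs
    push_neg at hs
    obtain ⟨c, hc, hcW⟩ := hs
    have hc0 : ∀ v ∈ W, c v = 0 := fun v hv => by have := hcW v hv; omega
    have hsupp : (c + a) ∈ (s * monomial a (1:k)).support := by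
      rw [mem_support_iff, coeff_mul_monomial, mul_one]
      exact mem_support_iff.mp hc
    rw [mem_Jdeg_iff] at hsa'
    have hdeg := hsa' _ hsupp
    rw [degW] at hdeg
    have h1 : ∑ v ∈ W, (c + a) v = ∑ v ∈ W, a v := by
      apply Finset.sum_congr rfl
      intro v hv
      rw [Finsupp.add_apply, hc0 v hv, zero_add]
    have h2 : ∑ v ∈ W, a v ≤ ∑ v ∈ W, b v := by
      apply Finset.sum_le_sum
      intro v hv
      have hvf := Finset.mem_filter.mp (hWsub hv)
      have hz : (a - b) v = 0 := hvf.2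
      rw [Finsupp.tsub_apply] at hz
      omega
    have h3 : ∑ v ∈ W, b v ≤ b.sum fun _ e => e := by
      rw [finsupp_sum_eq]
      exact Finset.sum_le_sum_of_subset (Finset.subset_univ W)
    omega
  · intro hRHS
    apply Submodule.mem_sInf.mpr
    rintro J ⟨p, hp, hassoc, rfl⟩
    obtain ⟨W, hWmin, rfl⟩ := assoc_eq_PW hassoc
    exact (mem_contraction_iff hp _ _).mpr (mem_pow_of_RHS hWmin m hm a hRHS)
end
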